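/- arXiv:1210.3958 — 5 statements merged into one kernel-verified Lean document; each statement's English description precedes it below -/
import Mathlib

section
/- Let α, β > −1 and κ, λ, δ, η ∈ ℂ with δ² = λ + (α+1)² and η² = λ + (β+1)². Let u : (0,1) → ℂ be twice differentiable and define f on (−1,1) by f(x) = (1−x)^{−(α+δ+1)/2} (1+x)^{−(β+η+1)/2} u((1+x)/2). Then f satisfies (Tf)(x) = λ f(x) for all x ∈ (−1,1) if and only if u satisfies the hypergeometric differential equation t(1−t) u''(t) + [c̃ − (ã+b̃+1) t] u'(t) − ã b̃ u(t) = 0 for all t ∈ (0,1), where ã = ½(1−δ−η−κ), b̃ = ½(1−δ−η+κ), c̃ = 1−η. -/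
noncomputable section
open MeasureTheory Asymptotics Filter

/-- Pochhammer symbol `(a)_k` in `ℂ`. -/
def poch (a : ℂ) (k : ℕ) : ℂ := ∏ i ∈ Finset.range k, (a + i)

/-- Pochhammer symbol `(a)_k` in `ℝ`. -/
def pochR (a : ℝ) (k : ℕ) : ℝ := ∏ i ∈ Finset.range k, (a + i)

/-- Gauss hypergeometric series `₂F₁(a,b;c;z)`. -/
def F21 (a b c z : ℂ) : ℂ :=
  ∑' k : ℕ, poch a k * poch b k / (poch c k * (Nat.factorial k : ℂ)) * z ^ k

/-- The differential operator `T = T^{(α,β;κ)}`. -/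
def Tdiff (α β : ℝ) (κ : ℂ) (f : ℝ → ℂ) (x : ℝ) : ℂ :=
  ((1 - x ^ 2 : ℝ) : ℂ) ^ 2 * deriv (deriv f) x
    + ((1 - x ^ 2 : ℝ) : ℂ) * ((β : ℂ) - (α : ℂ) - ((α : ℂ) + (β : ℂ) + 4) * (x : ℂ)) * deriv f x
    + (1 / 4) * (κ ^ 2 - ((α : ℂ) + (β : ℂ) + 3) ^ 2) * ((1 - x ^ 2 : ℝ) : ℂ) * f x

/-- The normalized Jacobi weight `w^{(α,β)}`. -/
def wJ (α β : ℝ) (x : ℝ) : ℝ :=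
  2 ^ (-α - β - 1) * Real.Gamma (α + β + 2) / (Real.Gamma (α + 1) * Real.Gamma (β + 1))
    * (1 - x) ^ α * (1 + x) ^ β

/-- The `c`-function `c(x;y)` (with parameter `κ`). -/
def cfun (κ x y : ℂ) : ℂ :=
  Complex.Gamma (1 + y) * Complex.Gamma (-x)
    / (Complex.Gamma ((1 + y - x + κ) / 2) * Complex.Gamma ((1 + y - x - κ) / 2))

/-- The eigenfunction `φ⁺_λ`; `φ⁻_λ` is obtained by replacing `η` with `-η`. -/
def phiP (α β : ℝ) (κ δ η : ℂ) (x : ℝ) : ℂ :=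
  (((1 - x) / 2 : ℝ) : ℂ) ^ (-((α : ℂ) + δ + 1) / 2)
    * (((1 + x) / 2 : ℝ) : ℂ) ^ (-((β : ℂ) - η + 1) / 2)
    * F21 ((1 - δ + η - κ) / 2) ((1 - δ + η + κ) / 2) (1 + η) (((1 + x) / 2 : ℝ) : ℂ)

/-- The eigenfunction `ψ⁺_λ`; `ψ⁻_λ` is obtained by replacing `δ` with `-δ`. -/
def psiP (α β : ℝ) (κ δ η : ℂ) (x : ℝ) : ℂ :=
  (((1 - x) / 2 : ℝ) : ℂ) ^ (-((α : ℂ) - δ + 1) / 2)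
    * (((1 + x) / 2 : ℝ) : ℂ) ^ (-((β : ℂ) + η + 1) / 2)
    * F21 ((1 + δ - η - κ) / 2) ((1 + δ - η + κ) / 2) (1 + δ) (((1 - x) / 2 : ℝ) : ℂ)

/-- The constant `C` from the weighted Wronskian. -/
def Cconst (α β : ℝ) : ℝ :=
  2 ^ (-α - β - 1) * Real.Gamma (α + β + 2) / (Real.Gamma (α + 1) * Real.Gamma (β + 1))

/-- The function `p(x) = C (1-x)^{α+2} (1+x)^{β+2}`. -/
def pfun (α β : ℝ) (x : ℝ) : ℝ := Cconst α β * (1 - x) ^ (α + 2) * (1 + x) ^ (β + 2)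

/-- Derivative value of `y ↦ (1-y)^r (1+y)^s w((1+y)/2)`. -/
def Dv (r s : ℂ) (w : ℝ → ℂ) (x : ℝ) : ℂ :=
  -r * ((1 - x : ℝ) : ℂ) ^ (r - 1) * ((1 + x : ℝ) : ℂ) ^ s * w ((1 + x) / 2)
    + s * ((1 - x : ℝ) : ℂ) ^ r * ((1 + x : ℝ) : ℂ) ^ (s - 1) * w ((1 + x) / 2)
    + ((1 - x : ℝ) : ℂ) ^ r * ((1 + x : ℝ) : ℂ) ^ s * deriv w ((1 + x) / 2) / 2

lemma hasDerivAt_PQW (r s : ℂ) (w : ℝ → ℂ) {x : ℝ} (hx : x ∈ Set.Ioo (-1 : ℝ) 1)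
    (hw : DifferentiableAt ℝ w ((1 + x) / 2)) :
    HasDerivAt (fun y : ℝ => ((1 - y : ℝ) : ℂ) ^ r * ((1 + y : ℝ) : ℂ) ^ s * w ((1 + y) / 2))
      (Dv r s w x) x := by
  have ha : (0 : ℝ) < 1 - x := by linarith [hx.2]
  have hb : (0 : ℝ) < 1 + x := by linarith [hx.1]
  have h1 : HasDerivAt (fun y : ℝ => ((1 - y : ℝ) : ℂ)) ((-1 : ℝ) : ℂ) x :=
    HasDerivAt.ofReal_comp (by simpa using (hasDerivAt_id x).const_sub 1)
  have h2 : HasDerivAt (fun y : ℝ => ((1 + y : ℝ) : ℂ)) ((1 : ℝ) : ℂ) x :=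
    HasDerivAt.ofReal_comp (by simpa using (hasDerivAt_id x).const_add 1)
  have hP : HasDerivAt (fun y : ℝ => ((1 - y : ℝ) : ℂ) ^ r)
      (r * ((1 - x : ℝ) : ℂ) ^ (r - 1) * ((-1 : ℝ) : ℂ)) x :=
    by have h := (Complex.hasStrictDerivAt_cpow_const (c := r)
         (Complex.ofReal_mem_slitPlane.2 ha)).hasDerivAt
       exact h.comp x h1
  have hQ : HasDerivAt (fun y : ℝ => ((1 + y : ℝ) : ℂ) ^ s)
      (s * ((1 + x : ℝ) : ℂ) ^ (s - 1) * ((1 : ℝ) : ℂ)) x :=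
    by have h := (Complex.hasStrictDerivAt_cpow_const (c := s)
         (Complex.ofReal_mem_slitPlane.2 hb)).hasDerivAt
       exact h.comp x h2
  have hi : HasDerivAt (fun y : ℝ => (1 + y) / 2) ((1 : ℝ) / 2) x := by
    simpa using ((hasDerivAt_id x).const_add 1).div_const 2
  have hW : HasDerivAt (fun y : ℝ => w ((1 + y) / 2))
      (((1 : ℝ) / 2) • deriv w ((1 + x) / 2)) x :=
    (hw.hasDerivAt.scomp x hi)
  have := (hP.mul hQ).mul hW
  convert this using 1
  · rfl
  · rfl
  simp only [Dv, Complex.real_smul, Pi.mul_apply]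
  push_cast
  ring

lemma key_sub (α β : ℝ) (κ lam δ η : ℂ)
    (hδ : δ ^ 2 = lam + ((α : ℂ) + 1) ^ 2) (hη : η ^ 2 = lam + ((β : ℂ) + 1) ^ 2)
    (u : ℝ → ℂ)
    (hu : ∀ t ∈ Set.Ioo (0 : ℝ) 1, DifferentiableAt ℝ u t ∧ DifferentiableAt ℝ (deriv u) t)
    {x : ℝ} (hx : x ∈ Set.Ioo (-1 : ℝ) 1) :
    Tdiff α β κ
      (fun y => ((1 - y : ℝ) : ℂ) ^ (-((α : ℂ) + δ + 1) / 2)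
        * ((1 + y : ℝ) : ℂ) ^ (-((β : ℂ) + η + 1) / 2) * u ((1 + y) / 2)) x
      - lam * (((1 - x : ℝ) : ℂ) ^ (-((α : ℂ) + δ + 1) / 2)
        * ((1 + x : ℝ) : ℂ) ^ (-((β : ℂ) + η + 1) / 2) * u ((1 + x) / 2))
    = (((1 - x : ℝ) : ℂ) * ((1 + x : ℝ) : ℂ)
        * (((1 - x : ℝ) : ℂ) ^ (-((α : ℂ) + δ + 1) / 2)
          * ((1 + x : ℝ) : ℂ) ^ (-((β : ℂ) + η + 1) / 2)))
      * ((((1 + x) / 2 : ℝ) : ℂ) * (1 - (((1 + x) / 2 : ℝ) : ℂ)) * deriv (deriv u) ((1 + x) / 2)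
          + ((1 - η) - ((1 - δ - η - κ) / 2 + (1 - δ - η + κ) / 2 + 1)
              * (((1 + x) / 2 : ℝ) : ℂ)) * deriv u ((1 + x) / 2)
          - ((1 - δ - η - κ) / 2) * ((1 - δ - η + κ) / 2) * u ((1 + x) / 2)) := by
  have hx1 := hx.1
  have hx2 := hx.2
  set p : ℂ := -((α : ℂ) + δ + 1) / 2 with hp
  set q : ℂ := -((β : ℂ) + η + 1) / 2 with hq
  set g : ℝ → ℂ := fun y =>
    ((1 - y : ℝ) : ℂ) ^ p * ((1 + y : ℝ) : ℂ) ^ q * u ((1 + y) / 2) with hgdef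
  have ht : (1 + x) / 2 ∈ Set.Ioo (0 : ℝ) 1 := ⟨by linarith, by linarith⟩
  have hu1 := (hu _ ht).1
  have hu2 := (hu _ ht).2
  have hg : ∀ y ∈ Set.Ioo (-1 : ℝ) 1, HasDerivAt g (Dv p q u y) y := by
    intro y hy
    exact hasDerivAt_PQW p q u hy (hu _ ⟨by linarith [hy.1], by linarith [hy.2]⟩).1
  have hderiv_x : deriv g x = Dv p q u x := (hg x hx).deriv
  have hG1 : HasDerivAt
      (fun y : ℝ =>
        -p * (((1 - y : ℝ) : ℂ) ^ (p - 1) * ((1 + y : ℝ) : ℂ) ^ q * u ((1 + y) / 2))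
          + q * (((1 - y : ℝ) : ℂ) ^ p * ((1 + y : ℝ) : ℂ) ^ (q - 1) * u ((1 + y) / 2))
          + (((1 - y : ℝ) : ℂ) ^ p * ((1 + y : ℝ) : ℂ) ^ q * deriv u ((1 + y) / 2)) / 2)
      (-p * Dv (p - 1) q u x + q * Dv p (q - 1) u x + Dv p q (deriv u) x / 2) x :=
    (((hasDerivAt_PQW (p - 1) q u hx hu1).const_mul (-p)).add
      ((hasDerivAt_PQW p (q - 1) u hx hu1).const_mul q)).add
      ((hasDerivAt_PQW p q (deriv u) hx hu2).div_const 2)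
  have hEv : deriv g =ᶠ[nhds x]
      (fun y : ℝ =>
        -p * (((1 - y : ℝ) : ℂ) ^ (p - 1) * ((1 + y : ℝ) : ℂ) ^ q * u ((1 + y) / 2))
          + q * (((1 - y : ℝ) : ℂ) ^ p * ((1 + y : ℝ) : ℂ) ^ (q - 1) * u ((1 + y) / 2))
          + (((1 - y : ℝ) : ℂ) ^ p * ((1 + y : ℝ) : ℂ) ^ q * deriv u ((1 + y) / 2)) / 2) := by
    refine Filter.eventuallyEq_of_mem (Ioo_mem_nhds hx1 hx2) (fun y hy => ?_)
    rw [(hg y hy).deriv]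
    simp only [Dv]
    ring
  have hderiv2 : deriv (deriv g) x
      = -p * Dv (p - 1) q u x + q * Dv p (q - 1) u x + Dv p q (deriv u) x / 2 := by
    rw [hEv.deriv_eq]; exact hG1.deriv
  have hane : ((1 - x : ℝ) : ℂ) ≠ 0 := by
    exact_mod_cast Complex.ofReal_ne_zero.2 (by linarith : (1 : ℝ) - x ≠ 0)
  have hbne : ((1 + x : ℝ) : ℂ) ≠ 0 := by
    exact_mod_cast Complex.ofReal_ne_zero.2 (by linarith : (1 : ℝ) + x ≠ 0)
  have e1 : ((1 - x : ℝ) : ℂ) ^ p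
      = ((1 - x : ℝ) : ℂ) ^ (p - 1 - 1) * ((1 - x : ℝ) : ℂ) * ((1 - x : ℝ) : ℂ) := by
    have h : ((1 - x : ℝ) : ℂ) ^ (p - 1 - 1 + 1 + 1)
        = ((1 - x : ℝ) : ℂ) ^ (p - 1 - 1) * ((1 - x : ℝ) : ℂ) ^ (1 : ℂ)
          * ((1 - x : ℝ) : ℂ) ^ (1 : ℂ) := by
      rw [Complex.cpow_add _ _ hane, Complex.cpow_add _ _ hane]
    simpa [Complex.cpow_one, show p - 1 - 1 + 1 + 1 = p by ring] using h
  have e2 : ((1 - x : ℝ) : ℂ) ^ (p - 1)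
      = ((1 - x : ℝ) : ℂ) ^ (p - 1 - 1) * ((1 - x : ℝ) : ℂ) := by
    have h : ((1 - x : ℝ) : ℂ) ^ (p - 1 - 1 + 1)
        = ((1 - x : ℝ) : ℂ) ^ (p - 1 - 1) * ((1 - x : ℝ) : ℂ) ^ (1 : ℂ) := by
      rw [Complex.cpow_add _ _ hane]
    simpa [Complex.cpow_one, show p - 1 - 1 + 1 = p - 1 by ring] using h
  have e3 : ((1 + x : ℝ) : ℂ) ^ q
      = ((1 + x : ℝ) : ℂ) ^ (q - 1 - 1) * ((1 + x : ℝ) : ℂ) * ((1 + x : ℝ) : ℂ) := by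
    have h : ((1 + x : ℝ) : ℂ) ^ (q - 1 - 1 + 1 + 1)
        = ((1 + x : ℝ) : ℂ) ^ (q - 1 - 1) * ((1 + x : ℝ) : ℂ) ^ (1 : ℂ)
          * ((1 + x : ℝ) : ℂ) ^ (1 : ℂ) := by
      rw [Complex.cpow_add _ _ hbne, Complex.cpow_add _ _ hbne]
    simpa [Complex.cpow_one, show q - 1 - 1 + 1 + 1 = q by ring] using h
  have e4 : ((1 + x : ℝ) : ℂ) ^ (q - 1)
      = ((1 + x : ℝ) : ℂ) ^ (q - 1 - 1) * ((1 + x : ℝ) : ℂ) := by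
    have h : ((1 + x : ℝ) : ℂ) ^ (q - 1 - 1 + 1)
        = ((1 + x : ℝ) : ℂ) ^ (q - 1 - 1) * ((1 + x : ℝ) : ℂ) ^ (1 : ℂ) := by
      rw [Complex.cpow_add _ _ hbne]
    simpa [Complex.cpow_one, show q - 1 - 1 + 1 = q - 1 by ring] using h
  simp only [Tdiff]
  rw [hderiv2, hderiv_x, hgdef]
  simp only [Dv]
  rw [e1, e2, e3, e4]
  push_cast
  linear_combination
    ((1 - (x : ℂ)) ^ (p - 1 - 1) * (1 + (x : ℂ)) ^ (q - 1 - 1) * (1 - (x : ℂ)) ^ 2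
      * (1 + (x : ℂ)) ^ 2 * u ((1 + x) / 2) * (1 + (x : ℂ)) / 2) * hδ
    + ((1 - (x : ℂ)) ^ (p - 1 - 1) * (1 + (x : ℂ)) ^ (q - 1 - 1) * (1 - (x : ℂ)) ^ 2
      * (1 + (x : ℂ)) ^ 2 * u ((1 + x) / 2) * (1 - (x : ℂ)) / 2) * hη

lemma cpow_ne_zero' {z : ℂ} (hz : z ≠ 0) (w : ℂ) : z ^ w ≠ 0 := by
  rw [Complex.cpow_def_of_ne_zero hz]; exact Complex.exp_ne_zero _

theorem stmt_6 (α β : ℝ) (hα : -1 < α) (hβ : -1 < β) (κ lam δ η : ℂ)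
    (hδ : δ ^ 2 = lam + ((α : ℂ) + 1) ^ 2) (hη : η ^ 2 = lam + ((β : ℂ) + 1) ^ 2)
    (u : ℝ → ℂ)
    (hu : ∀ t ∈ Set.Ioo (0 : ℝ) 1, DifferentiableAt ℝ u t ∧ DifferentiableAt ℝ (deriv u) t) :
    (∀ x ∈ Set.Ioo (-1 : ℝ) 1,
        Tdiff α β κ
          (fun y => ((1 - y : ℝ) : ℂ) ^ (-((α : ℂ) + δ + 1) / 2)
            * ((1 + y : ℝ) : ℂ) ^ (-((β : ℂ) + η + 1) / 2) * u ((1 + y) / 2)) x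
          = lam * (((1 - x : ℝ) : ℂ) ^ (-((α : ℂ) + δ + 1) / 2)
            * ((1 + x : ℝ) : ℂ) ^ (-((β : ℂ) + η + 1) / 2) * u ((1 + x) / 2)))
    ↔
    (∀ t ∈ Set.Ioo (0 : ℝ) 1,
        (t : ℂ) * (1 - (t : ℂ)) * deriv (deriv u) t
          + ((1 - η) - ((1 - δ - η - κ) / 2 + (1 - δ - η + κ) / 2 + 1) * (t : ℂ)) * deriv u t
          - ((1 - δ - η - κ) / 2) * ((1 - δ - η + κ) / 2) * u t = 0) := by
  constructor
  · intro hT t ht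
    have hx : (2 * t - 1) ∈ Set.Ioo (-1 : ℝ) 1 := ⟨by linarith [ht.1], by linarith [ht.2]⟩
    have hk := key_sub α β κ lam δ η hδ hη u hu hx
    rw [hT _ hx, sub_self] at hk
    have harg : (1 + (2 * t - 1)) / 2 = t := by ring
    rw [harg] at hk
    have hM : (((1 - (2 * t - 1) : ℝ) : ℂ) * ((1 + (2 * t - 1) : ℝ) : ℂ)
        * (((1 - (2 * t - 1) : ℝ) : ℂ) ^ (-((α : ℂ) + δ + 1) / 2)
          * ((1 + (2 * t - 1) : ℝ) : ℂ) ^ (-((β : ℂ) + η + 1) / 2))) ≠ 0 := by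
      have ha : ((1 - (2 * t - 1) : ℝ) : ℂ) ≠ 0 :=
        Complex.ofReal_ne_zero.2 (by linarith [ht.2] : (1 : ℝ) - (2 * t - 1) ≠ 0)
      have hb : ((1 + (2 * t - 1) : ℝ) : ℂ) ≠ 0 :=
        Complex.ofReal_ne_zero.2 (by linarith [ht.1] : (1 : ℝ) + (2 * t - 1) ≠ 0)
      exact mul_ne_zero (mul_ne_zero ha hb)
        (mul_ne_zero (cpow_ne_zero' ha _) (cpow_ne_zero' hb _))
    rcases mul_eq_zero.mp hk.symm with h | h
    · exact absurd h hM
    · exact h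
  · intro hE x hx
    have hk := key_sub α β κ lam δ η hδ hη u hu hx
    have ht : (1 + x) / 2 ∈ Set.Ioo (0 : ℝ) 1 := ⟨by linarith [hx.1], by linarith [hx.2]⟩
    rw [hE _ ht, mul_zero] at hk
    exact sub_eq_zero.mp hk
end
end

section
/- Let α, β > −1 and κ, λ, δ, η ∈ ℂ with δ² = λ + (α+1)², η² = λ + (β+1)², and η ∉ ℤ. Then for every x ∈ (−1,1), p(x) · ( (φ⁻_λ)'(x) φ⁺_λ(x) − φ⁻_λ(x) (φ⁺_λ)'(x) ) = −η D, where D = 2^{α+β+3} C; in particular the weighted Wronskian [φ⁻_λ, φ⁺_λ] is constant on (−1,1). -/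
noncomputable section
open MeasureTheory Asymptotics Filter

namespace Aux8

lemma poch_zero (a : ℂ) : poch a 0 = 1 := by simp [poch]

lemma poch_succ (a : ℂ) (k : ℕ) : poch a (k+1) = poch a k * (a + k) :=
  Finset.prod_range_succ _ _

lemma poch_ne_zero {c : ℂ} (hc : ∀ k : ℕ, c + k ≠ 0) (k : ℕ) : poch c k ≠ 0 :=
  Finset.prod_ne_zero_iff.2 fun i _ => hc i

/-- coefficient of the hypergeometric series -/
def coef (a b c : ℂ) (k : ℕ) : ℂ := poch a k * poch b k / (poch c k * (Nat.factorial k : ℂ))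

lemma coef_zero (a b c : ℂ) : coef a b c 0 = 1 := by simp [coef, poch_zero]

lemma coef_rec {c : ℂ} (a b : ℂ) (hc : ∀ k : ℕ, c + k ≠ 0) (k : ℕ) :
    coef a b c (k+1) * ((c + k) * (k+1)) = coef a b c k * ((a + k) * (b + k)) := by
  have h1 : poch c k ≠ 0 := poch_ne_zero hc k
  have h2 : (Nat.factorial k : ℂ) ≠ 0 := Nat.cast_ne_zero.2 (Nat.factorial_ne_zero k)
  have h3 : c + k ≠ 0 := hc k
  have h4 : ((k:ℂ) + 1) ≠ 0 := by
    intro h; have := hc k; exact (Nat.cast_add_one_ne_zero k) h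
  rw [coef, coef, poch_succ, poch_succ, poch_succ, Nat.factorial_succ]
  push_cast
  field_simp

end Aux8

namespace Aux8

lemma tendsto_shift_div (w v : ℂ) :
    Tendsto (fun k : ℕ => (w + k) / (v + k)) atTop (nhds 1) := by
  have hb : Tendsto (fun k : ℕ => (k : ℝ) - ‖v‖) atTop atTop :=
    tendsto_atTop_add_const_right _ _ tendsto_natCast_atTop_atTop
  have hpos : ∀ᶠ k : ℕ in atTop, 0 < (k : ℝ) - ‖v‖ := hb.eventually_gt_atTop 0
  have h0 : Tendsto (fun k : ℕ => (w - v) / (v + k)) atTop (nhds 0) := by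
    apply squeeze_zero_norm' (a := fun k : ℕ => ‖w - v‖ / ((k : ℝ) - ‖v‖))
    · filter_upwards [hpos] with k hk
      rw [norm_div]
      apply div_le_div_of_nonneg_left (norm_nonneg _) hk
      have h5 : ‖(k:ℂ)‖ ≤ ‖v + (k:ℂ)‖ + ‖v‖ := by simpa using norm_sub_le (v + (k:ℂ)) v
      have h6 : ‖(k:ℂ)‖ = (k:ℝ) := by simp
      linarith
    · exact Tendsto.div_atTop tendsto_const_nhds hb
  have hne : ∀ᶠ k : ℕ in atTop, v + (k : ℂ) ≠ 0 := by
    filter_upwards [hpos] with k hk h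
    have hv : v = -(k : ℂ) := by linear_combination h
    rw [hv] at hk
    simp at hk
  have := (tendsto_const_nhds (x := (1:ℂ)) (f := atTop)).add h0
  rw [add_zero] at this
  apply this.congr'
  filter_upwards [hne] with k hk
  field_simp
  ring

lemma tendsto_norm_shift_div (w v : ℂ) :
    Tendsto (fun k : ℕ => ‖(w + k) / (v + k)‖) atTop (nhds 1) := by
  simpa using (tendsto_shift_div w v).norm

lemma summable_norm_geom {g q : ℕ → ℂ} (hrec : ∀ᶠ k in atTop, g (k+1) = g k * q k)
    (hq : Tendsto (fun k => ‖q k‖) atTop (nhds 1)) {r : ℝ} (h0 : 0 < r) (h1 : r < 1) :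
    Summable (fun k => ‖g k‖ * r ^ k) := by
  have hr' : (1 + r) / 2 < 1 := by linarith
  have hrr' : r < (1 + r) / 2 := by linarith
  apply summable_of_ratio_norm_eventually_le hr'
  have hq' : ∀ᶠ k in atTop, ‖q k‖ < ((1 + r) / 2) / r := by
    apply hq.eventually_lt_const
    rw [lt_div_iff₀ h0]; linarith
  filter_upwards [hrec, hq'] with k hk hk'
  have nn : ∀ s : ℕ → ℂ, ∀ m : ℕ, ‖‖s m‖ * r ^ m‖ = ‖s m‖ * r ^ m := fun s m =>
    Real.norm_of_nonneg (by positivity)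
  rw [nn g (k+1), nn g k, hk, norm_mul, pow_succ]
  calc ‖g k‖ * ‖q k‖ * (r ^ k * r) ≤ ‖g k‖ * (((1 + r) / 2) / r) * (r ^ k * r) := by
        apply mul_le_mul_of_nonneg_right _ (by positivity)
        exact mul_le_mul_of_nonneg_left hk'.le (norm_nonneg _)
    _ = (1 + r) / 2 * (‖g k‖ * r ^ k) := by field_simp

/-- property: summable against every geometric with ratio < 1 -/
def S (g : ℕ → ℂ) : Prop := ∀ r : ℝ, 0 < r → r < 1 → Summable (fun k => ‖g k‖ * r ^ k)

lemma S.of_le {g g' : ℕ → ℂ} (h : ∀ k, ‖g' k‖ ≤ ‖g k‖) (hg : S g) : S g' := by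
  intro r h0 h1
  apply Summable.of_nonneg_of_le (fun k => by positivity)
    (fun k => mul_le_mul_of_nonneg_right (h k) (by positivity)) (hg r h0 h1)

lemma S.shift {g : ℕ → ℂ} (hg : S g) : S (fun k => g (k+1)) := by
  intro r h0 h1
  have := (summable_nat_add_iff 1).2 (hg r h0 h1)
  have h2 : Summable (fun k => (1/r) * (‖g (k+1)‖ * r ^ (k+1))) := this.mul_left _
  apply h2.congr
  intro k
  rw [pow_succ]
  field_simp

lemma S.mul_nat {g : ℕ → ℂ} (hg : S g) : S (fun k => ((k : ℂ) + 1) * g k) := by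
  intro r h0 h1
  set r' := (1 + r) / 2 with hr'def
  have hr0 : 0 < r' := by rw [hr'def]; linarith
  have hr1 : r' < 1 := by rw [hr'def]; linarith
  have hrr : r < r' := by rw [hr'def]; linarith
  have ht1 : r / r' < 1 := by rw [div_lt_one hr0]; exact hrr
  have ht0 : 0 ≤ r / r' := by positivity
  -- (k+1) (r/r')^k is bounded
  have hsum : Summable (fun k : ℕ => ((k:ℝ) + 1) * (r / r') ^ k) := by
    have h1' : Summable (fun k : ℕ => (k:ℝ) ^ 1 * (r / r') ^ k) := by
      apply summable_pow_mul_geometric_of_norm_lt_one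
      rw [Real.norm_of_nonneg ht0]; exact ht1
    have h2' : Summable (fun k : ℕ => (r / r') ^ k) := summable_geometric_of_lt_one ht0 ht1
    simpa [add_mul, pow_one] using h1'.add h2'
  obtain ⟨Cb, hCb⟩ := hsum.tendsto_atTop_zero.bddAbove_range
  have hbound : ∀ k : ℕ, ((k:ℝ) + 1) * (r / r') ^ k ≤ Cb := fun k =>
    hCb (Set.mem_range_self k)
  apply Summable.of_nonneg_of_le (fun k => by positivity)
    (fun k => ?_) (((hg r' hr0 hr1)).mul_left Cb)
  have hnorm : ‖((k : ℂ) + 1) * g k‖ = ((k:ℝ) + 1) * ‖g k‖ := by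
    rw [norm_mul]
    congr 1
    have : ((k : ℂ) + 1) = ((((k:ℝ)) + 1 : ℝ) : ℂ) := by push_cast; ring
    rw [this, Complex.norm_real, Real.norm_of_nonneg (by positivity)]
  rw [hnorm]
  have key : ((k:ℝ) + 1) * ‖g k‖ * r ^ k = (((k:ℝ) + 1) * (r/r') ^ k) * (‖g k‖ * r' ^ k) := by
    rw [div_pow]
    field_simp
  rw [key]
  apply mul_le_mul_of_nonneg_right (hbound k) (by positivity)

end Aux8

namespace Aux8

variable {a b c : ℂ}

lemma coef_rec' (a b : ℂ) (hc : ∀ k : ℕ, c + k ≠ 0) (k : ℕ) :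
    coef a b c (k+1) = coef a b c k * ((a + k) / (c + k) * ((b + k) / (1 + k))) := by
  have h3 : c + (k:ℂ) ≠ 0 := hc k
  have h4 : (1 + (k:ℂ)) ≠ 0 := by
    intro h
    have h5 : ((k + 1 : ℕ) : ℂ) = 0 := by push_cast; linear_combination h
    exact Nat.cast_ne_zero.2 (Nat.succ_ne_zero k) h5
  have := coef_rec a b hc k
  field_simp at this ⊢
  linear_combination this

lemma S_coef (a b : ℂ) (hc : ∀ k : ℕ, c + k ≠ 0) : S (coef a b c) := by
  intro r h0 h1
  apply summable_norm_geom (q := fun k => (a + k) / (c + k) * ((b + k) / (1 + k)))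
    (Eventually.of_forall (coef_rec' a b hc)) _ h0 h1
  have h2 := (tendsto_norm_shift_div a c).mul (tendsto_norm_shift_div b 1)
  rw [mul_one] at h2
  simpa [norm_mul] using h2

/-- coefficients of the derivative series -/
def dcoef (g : ℕ → ℂ) (k : ℕ) : ℂ := ((k : ℂ) + 1) * g (k + 1)

lemma S.dcoef' {g : ℕ → ℂ} (hg : S g) : S (dcoef g) := hg.shift.mul_nat

lemma S.summable_aux {g : ℕ → ℂ} (hg : S g) {t : ℝ} (ht : |t| < 1) :
    Summable (fun k => g k * ((t:ℝ):ℂ) ^ k) := by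
  apply Summable.of_norm
  have h0 : 0 < (|t| + 1) / 2 := by positivity
  have h1 : (|t| + 1) / 2 < 1 := by linarith
  apply Summable.of_nonneg_of_le (fun k => norm_nonneg _) (fun k => ?_) (hg _ h0 h1)
  rw [norm_mul, norm_pow, Complex.norm_real, Real.norm_eq_abs]
  apply mul_le_mul_of_nonneg_left _ (norm_nonneg _)
  apply pow_le_pow_left₀ (abs_nonneg t) (by linarith)

lemma S.hasDerivAt {g : ℕ → ℂ} (hg : S g) {t : ℝ} (ht : |t| < 1) :
    HasDerivAt (fun y : ℝ => ∑' k, g k * ((y:ℝ):ℂ) ^ k)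
      (∑' k, dcoef g k * ((t:ℝ):ℂ) ^ k) t := by
  set r : ℝ := (|t| + 1) / 2 with hrdef
  have h0 : 0 < r := by positivity
  have h1 : r < 1 := by rw [hrdef]; linarith
  have htr : |t| < r := by rw [hrdef]; linarith
  -- the uniform bound
  set u : ℕ → ℝ := fun k => ‖g k‖ * (k : ℝ) * r ^ (k - 1) with hudef
  have hu : Summable u := by
    rw [← summable_nat_add_iff 1]
    apply ((hg.dcoef') r h0 h1).congr
    intro k
    rw [hudef]
    simp only [dcoef, norm_mul, Nat.add_sub_cancel]
    have : ‖(k:ℂ) + 1‖ = (k:ℝ) + 1 := by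
      rw [show ((k:ℂ) + 1) = (((k:ℝ) + 1 : ℝ) : ℂ) by push_cast; ring, Complex.norm_real,
        Real.norm_of_nonneg (by positivity)]
    rw [this]
    push_cast
    ring
  have hD : ∀ (k : ℕ) (y : ℝ), y ∈ Metric.ball (0:ℝ) r →
      HasDerivAt (fun y : ℝ => g k * ((y:ℝ):ℂ) ^ k)
        (g k * ((k : ℂ) * ((y:ℝ):ℂ) ^ (k - 1))) y := by
    intro k y _
    exact ((hasDerivAt_pow k ((y:ℝ):ℂ)).comp_ofReal).const_mul (g k)
  have hB : ∀ (k : ℕ) (y : ℝ), y ∈ Metric.ball (0:ℝ) r →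
      ‖g k * ((k : ℂ) * ((y:ℝ):ℂ) ^ (k - 1))‖ ≤ u k := by
    intro k y hy
    rw [Metric.mem_ball, Real.dist_eq, sub_zero] at hy
    rw [norm_mul, norm_mul, norm_pow, Complex.norm_real, Real.norm_eq_abs, Complex.norm_natCast,
      hudef]
    simp only [← mul_assoc]
    rw [mul_assoc]
    rw [show ‖g k‖ * (k:ℝ) * r ^ (k-1) = ‖g k‖ * ((k:ℝ) * r ^ (k-1)) by ring]
    apply mul_le_mul_of_nonneg_left _ (norm_nonneg _)
    apply mul_le_mul_of_nonneg_left _ (Nat.cast_nonneg k)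
    exact pow_le_pow_left₀ (abs_nonneg y) hy.le _
  have hmem : t ∈ Metric.ball (0:ℝ) r := by
    rw [Metric.mem_ball, Real.dist_eq, sub_zero]; exact htr
  have h0mem : (0:ℝ) ∈ Metric.ball (0:ℝ) r := by
    rw [Metric.mem_ball, Real.dist_eq, sub_zero]; simpa using h0
  have hsum0 : Summable (fun k => g k * ((0:ℝ):ℂ) ^ k) :=
    hg.summable_aux (by simpa using one_pos)
  have := hasDerivAt_tsum_of_isPreconnected hu Metric.isOpen_ball
    (convex_ball (0:ℝ) r).isPreconnected hD hB h0mem hsum0 hmem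
  refine this.congr_deriv (Eq.symm ?_)
  -- identify the two tsums
  have hsumm : Summable (fun k => g k * ((k : ℂ) * ((t:ℝ):ℂ) ^ (k - 1))) := by
    apply Summable.of_norm
    apply Summable.of_nonneg_of_le (fun k => norm_nonneg _) (fun k => hB k t hmem) hu
  rw [Summable.tsum_eq_zero_add hsumm]
  simp only [Nat.cast_zero, zero_mul, mul_zero, zero_add, Nat.add_sub_cancel]
  apply tsum_congr
  intro k
  simp only [dcoef]
  push_cast
  ring

end Aux8

namespace Aux8

lemma norm_natCast_add_one (k : ℕ) : ‖(k:ℂ) + 1‖ = (k:ℝ) + 1 := by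
  rw [show ((k:ℂ) + 1) = (((k:ℝ) + 1 : ℝ) : ℂ) by push_cast; ring, Complex.norm_real,
    Real.norm_of_nonneg (by positivity)]

lemma S.mul_k {g : ℕ → ℂ} (hg : S g) : S (fun k => (k:ℂ) * g k) := by
  apply S.of_le _ hg.mul_nat
  intro k
  rw [norm_mul, norm_mul, norm_natCast_add_one, Complex.norm_natCast]
  apply mul_le_mul_of_nonneg_right (by linarith) (norm_nonneg _)

lemma S.mul_kk {g : ℕ → ℂ} (hg : S g) : S (fun k => (k:ℂ) * ((k:ℂ) - 1) * g k) := by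
  apply S.of_le _ hg.mul_nat.mul_nat
  intro k
  rw [norm_mul, norm_mul, norm_mul, norm_mul, norm_natCast_add_one, Complex.norm_natCast]
  have h1 : ‖(k:ℂ) - 1‖ ≤ (k:ℝ) + 1 := by
    calc ‖(k:ℂ) - 1‖ ≤ ‖(k:ℂ)‖ + ‖(1:ℂ)‖ := norm_sub_le _ _
      _ = (k:ℝ) + 1 := by rw [Complex.norm_natCast, norm_one]
  calc (k:ℝ) * ‖(k:ℂ) - 1‖ * ‖g k‖ ≤ (k:ℝ) * ((k:ℝ) + 1) * ‖g k‖ := by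
        apply mul_le_mul_of_nonneg_right _ (norm_nonneg _)
        exact mul_le_mul_of_nonneg_left h1 (Nat.cast_nonneg k)
    _ ≤ ((k:ℝ) + 1) * (((k:ℝ) + 1) * ‖g k‖) := by
        have : (0:ℝ) ≤ ‖g k‖ := norm_nonneg _
        nlinarith [Nat.cast_nonneg (α := ℝ) k]

lemma tsum_shift_mul {g : ℕ → ℂ} (hg : S g) {t : ℝ} (ht : |t| < 1) :
    ((t:ℝ):ℂ) * ∑' k, dcoef g k * ((t:ℝ):ℂ) ^ k = ∑' k : ℕ, (k:ℂ) * g k * ((t:ℝ):ℂ) ^ k := by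
  set z : ℂ := ((t:ℝ):ℂ)
  have hm : Summable (fun k : ℕ => (k:ℂ) * g k * z ^ k) := hg.mul_k.summable_aux ht
  rw [Summable.tsum_eq_zero_add hm]
  rw [← tsum_mul_left]
  simp only [Nat.cast_zero, zero_mul, zero_add]
  apply tsum_congr
  intro k
  simp only [dcoef]
  push_cast
  ring

lemma tsum_shift2_mul {g : ℕ → ℂ} (hg : S g) {t : ℝ} (ht : |t| < 1) :
    ((t:ℝ):ℂ) ^ 2 * ∑' k, dcoef (dcoef g) k * ((t:ℝ):ℂ) ^ k
      = ∑' k : ℕ, (k:ℂ) * ((k:ℂ) - 1) * g k * ((t:ℝ):ℂ) ^ k := by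
  set z : ℂ := ((t:ℝ):ℂ)
  have hm : Summable (fun k : ℕ => (k:ℂ) * ((k:ℂ) - 1) * g k * z ^ k) := hg.mul_kk.summable_aux ht
  rw [Summable.tsum_eq_zero_add hm]
  have hm1 : Summable (fun k => ((k+1:ℕ):ℂ) * (((k+1:ℕ):ℂ) - 1) * g (k+1) * z ^ (k+1)) := by
    apply (summable_nat_add_iff 1).2 hm
  rw [Summable.tsum_eq_zero_add hm1]
  rw [← tsum_mul_left]
  simp only [Nat.cast_zero, zero_mul, zero_add, Nat.cast_one, Nat.cast_add]
  norm_num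
  apply tsum_congr
  intro k
  simp only [dcoef]
  push_cast
  ring

end Aux8

namespace Aux8

lemma hyper_ODE (a b c : ℂ) (hc : ∀ k : ℕ, c + k ≠ 0) {t : ℝ} (ht : |t| < 1) :
    ((t:ℝ):ℂ) * (1 - ((t:ℝ):ℂ)) * (∑' k : ℕ, dcoef (dcoef (coef a b c)) k * ((t:ℝ):ℂ) ^ k)
      + (c - (a + b + 1) * ((t:ℝ):ℂ)) * (∑' k : ℕ, dcoef (coef a b c) k * ((t:ℝ):ℂ) ^ k)
      - a * b * (∑' k : ℕ, coef a b c k * ((t:ℝ):ℂ) ^ k) = 0 := by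
  set z : ℂ := ((t:ℝ):ℂ) with hz
  set g : ℕ → ℂ := coef a b c with hgdef
  have hS : S g := S_coef a b hc
  have hS1 : S (dcoef g) := hS.dcoef'
  have s1 : Summable (fun k : ℕ => (k:ℂ) * dcoef g k * z ^ k) := hS1.mul_k.summable_aux ht
  have s2 : Summable (fun k : ℕ => (k:ℂ) * ((k:ℂ) - 1) * g k * z ^ k) := hS.mul_kk.summable_aux ht
  have s3 : Summable (fun k : ℕ => dcoef g k * z ^ k) := hS1.summable_aux ht
  have s4 : Summable (fun k : ℕ => (k:ℂ) * g k * z ^ k) := hS.mul_k.summable_aux ht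
  have s5 : Summable (fun k : ℕ => g k * z ^ k) := hS.summable_aux ht
  have E1 : z * (∑' k : ℕ, dcoef (dcoef g) k * z ^ k) = ∑' k : ℕ, (k:ℂ) * dcoef g k * z ^ k :=
    tsum_shift_mul hS1 ht
  have E2 : z * (∑' k : ℕ, dcoef g k * z ^ k) = ∑' k : ℕ, (k:ℂ) * g k * z ^ k :=
    tsum_shift_mul hS ht
  have E3 : z ^ 2 * (∑' k : ℕ, dcoef (dcoef g) k * z ^ k)
      = ∑' k : ℕ, (k:ℂ) * ((k:ℂ) - 1) * g k * z ^ k := tsum_shift2_mul hS ht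
  have W : ∀ k : ℕ, (k:ℂ) * dcoef g k + c * dcoef g k - (k:ℂ) * ((k:ℂ) - 1) * g k
      - (a + b + 1) * ((k:ℂ) * g k) - a * b * g k = 0 := by
    intro k
    have hr := coef_rec a b hc k
    simp only [hgdef, dcoef]
    push_cast
    linear_combination hr
  have Z : (∑' k : ℕ, (k:ℂ) * dcoef g k * z ^ k) + c * (∑' k : ℕ, dcoef g k * z ^ k)
      - (∑' k : ℕ, (k:ℂ) * ((k:ℂ) - 1) * g k * z ^ k)
      - (a + b + 1) * (∑' k : ℕ, (k:ℂ) * g k * z ^ k)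
      - a * b * (∑' k : ℕ, g k * z ^ k) = 0 := by
    rw [← tsum_mul_left (a := c), ← tsum_mul_left (a := a + b + 1), ← tsum_mul_left (a := a * b)]
    rw [← Summable.tsum_add s1 (s3.mul_left c)]
    rw [← Summable.tsum_sub (s1.add (s3.mul_left c)) s2]
    rw [← Summable.tsum_sub ((s1.add (s3.mul_left c)).sub s2) (s4.mul_left (a + b + 1))]
    rw [← Summable.tsum_sub (((s1.add (s3.mul_left c)).sub s2).sub (s4.mul_left (a + b + 1)))
      (s5.mul_left (a * b))]
    have : ∀ k : ℕ, (k:ℂ) * dcoef g k * z ^ k + c * (dcoef g k * z ^ k)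
        - (k:ℂ) * ((k:ℂ) - 1) * g k * z ^ k - (a + b + 1) * ((k:ℂ) * g k * z ^ k)
        - a * b * (g k * z ^ k) = 0 := by
      intro k
      linear_combination z ^ k * W k
    calc _ = ∑' _ : ℕ, (0:ℂ) := tsum_congr this
      _ = 0 := tsum_zero
  linear_combination Z + E1 - E3 - (a + b + 1) * E2

end Aux8

namespace Aux8

def FFa (a b c : ℂ) (t : ℝ) : ℂ := ∑' k : ℕ, coef a b c k * ((t:ℝ):ℂ) ^ k
def FF1a (a b c : ℂ) (t : ℝ) : ℂ := ∑' k : ℕ, dcoef (coef a b c) k * ((t:ℝ):ℂ) ^ k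
def FF2a (a b c : ℂ) (t : ℝ) : ℂ := ∑' k : ℕ, dcoef (dcoef (coef a b c)) k * ((t:ℝ):ℂ) ^ k

lemma FFa_hasDerivAt (a b c : ℂ) (hc : ∀ k : ℕ, c + k ≠ 0) {t : ℝ} (ht : |t| < 1) :
    HasDerivAt (FFa a b c) (FF1a a b c t) t :=
  (S_coef a b hc).hasDerivAt ht

lemma FF1a_hasDerivAt (a b c : ℂ) (hc : ∀ k : ℕ, c + k ≠ 0) {t : ℝ} (ht : |t| < 1) :
    HasDerivAt (FF1a a b c) (FF2a a b c t) t :=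
  (S_coef a b hc).dcoef'.hasDerivAt ht

lemma FFa_zero (a b c : ℂ) : FFa a b c 0 = 1 := by
  rw [FFa, tsum_eq_single 0]
  · simp [coef_zero]
  · intro k hk
    simp [zero_pow hk]

lemma FFa_ODE (a b c : ℂ) (hc : ∀ k : ℕ, c + k ≠ 0) {t : ℝ} (ht : |t| < 1) :
    ((t:ℝ):ℂ) * (1 - ((t:ℝ):ℂ)) * FF2a a b c t
      + (c - (a + b + 1) * ((t:ℝ):ℂ)) * FF1a a b c t - a * b * FFa a b c t = 0 :=
  hyper_ODE a b c hc ht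

end Aux8


namespace Aux8

section Key

variable (d e κ' : ℂ)

def Fp (d e κ' : ℂ) (t : ℝ) : ℂ := FFa ((1 - d + e - κ') / 2) ((1 - d + e + κ') / 2) (1 + e) t
def Fp1 (d e κ' : ℂ) (t : ℝ) : ℂ := FF1a ((1 - d + e - κ') / 2) ((1 - d + e + κ') / 2) (1 + e) t
def Fp2 (d e κ' : ℂ) (t : ℝ) : ℂ := FF2a ((1 - d + e - κ') / 2) ((1 - d + e + κ') / 2) (1 + e) t
def Fm (d e κ' : ℂ) (t : ℝ) : ℂ := FFa ((1 - d - e - κ') / 2) ((1 - d - e + κ') / 2) (1 - e) t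
def Fm1 (d e κ' : ℂ) (t : ℝ) : ℂ := FF1a ((1 - d - e - κ') / 2) ((1 - d - e + κ') / 2) (1 - e) t
def Fm2 (d e κ' : ℂ) (t : ℝ) : ℂ := FF2a ((1 - d - e - κ') / 2) ((1 - d - e + κ') / 2) (1 - e) t

/-- the unweighted Wronskian-type combination -/
def Kw (d e κ' : ℂ) (t : ℝ) : ℂ :=
  -e * Fm d e κ' t * Fp d e κ' t
    + (t:ℂ) * (Fm1 d e κ' t * Fp d e κ' t - Fm d e κ' t * Fp1 d e κ' t)

/-- pointwise derivative value of `Kw` -/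
def Kwd (d e κ' : ℂ) (t : ℝ) : ℂ :=
  -e * (Fm1 d e κ' t * Fp d e κ' t + Fm d e κ' t * Fp1 d e κ' t)
    + (Fm1 d e κ' t * Fp d e κ' t - Fm d e κ' t * Fp1 d e κ' t)
    + (t:ℂ) * (Fm2 d e κ' t * Fp d e κ' t - Fm d e κ' t * Fp2 d e κ' t)

variable (hcp : ∀ k : ℕ, (1 + e) + k ≠ 0) (hcm : ∀ k : ℕ, (1 - e) + k ≠ 0)

include hcp hcm in
lemma Kw_hasDerivAt {t : ℝ} (ht : |t| < 1) :
    HasDerivAt (Kw d e κ') (Kwd d e κ' t) t := by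
  have hFp : HasDerivAt (Fp d e κ') (Fp1 d e κ' t) t :=
    FFa_hasDerivAt ((1 - d + e - κ') / 2) ((1 - d + e + κ') / 2) (1 + e) hcp ht
  have hFp1 : HasDerivAt (Fp1 d e κ') (Fp2 d e κ' t) t :=
    FF1a_hasDerivAt ((1 - d + e - κ') / 2) ((1 - d + e + κ') / 2) (1 + e) hcp ht
  have hFm : HasDerivAt (Fm d e κ') (Fm1 d e κ' t) t :=
    FFa_hasDerivAt ((1 - d - e - κ') / 2) ((1 - d - e + κ') / 2) (1 - e) hcm ht
  have hFm1 : HasDerivAt (Fm1 d e κ') (Fm2 d e κ' t) t :=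
    FF1a_hasDerivAt ((1 - d - e - κ') / 2) ((1 - d - e + κ') / 2) (1 - e) hcm ht
  have hid : HasDerivAt (fun s : ℝ => ((s:ℝ):ℂ)) 1 t := by
    simpa using (hasDerivAt_id t).ofReal_comp
  have h1 : HasDerivAt (fun s => -e * Fm d e κ' s * Fp d e κ' s)
      (-e * Fm1 d e κ' t * Fp d e κ' t + -e * Fm d e κ' t * Fp1 d e κ' t) t := by
    have h0 : HasDerivAt (fun s => -e * Fm d e κ' s) (-e * Fm1 d e κ' t) t := hFm.const_mul (-e)
    exact h0.mul hFp
  have hin : HasDerivAt (fun s : ℝ => Fm1 d e κ' s * Fp d e κ' s - Fm d e κ' s * Fp1 d e κ' s)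
      ((Fm2 d e κ' t * Fp d e κ' t + Fm1 d e κ' t * Fp1 d e κ' t)
        - (Fm1 d e κ' t * Fp1 d e κ' t + Fm d e κ' t * Fp2 d e κ' t)) t :=
    (hFm1.mul hFp).sub (hFm.mul hFp1)
  have h2 := hid.mul hin
  have h3 := h1.add h2
  have : Kw d e κ' = fun s => -e * Fm d e κ' s * Fp d e κ' s
      + (s:ℂ) * (Fm1 d e κ' s * Fp d e κ' s - Fm d e κ' s * Fp1 d e κ' s) := rfl
  rw [this, Kwd]
  exact h3.congr_deriv (by ring)

include hcp hcm in
lemma Kw_deriv_identity {t : ℝ} (ht : |t| < 1) :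
    (1 - ((t:ℝ):ℂ)) * Kwd d e κ' t = (1 - d) * Kw d e κ' t := by
  have hEp := FFa_ODE ((1 - d + e - κ') / 2) ((1 - d + e + κ') / 2) (1 + e) hcp ht
  have hEm := FFa_ODE ((1 - d - e - κ') / 2) ((1 - d - e + κ') / 2) (1 - e) hcm ht
  rw [show FFa ((1 - d + e - κ') / 2) ((1 - d + e + κ') / 2) (1 + e) t = Fp d e κ' t from rfl,
    show FF1a ((1 - d + e - κ') / 2) ((1 - d + e + κ') / 2) (1 + e) t = Fp1 d e κ' t from rfl,
    show FF2a ((1 - d + e - κ') / 2) ((1 - d + e + κ') / 2) (1 + e) t = Fp2 d e κ' t from rfl]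
    at hEp
  rw [show FFa ((1 - d - e - κ') / 2) ((1 - d - e + κ') / 2) (1 - e) t = Fm d e κ' t from rfl,
    show FF1a ((1 - d - e - κ') / 2) ((1 - d - e + κ') / 2) (1 - e) t = Fm1 d e κ' t from rfl,
    show FF2a ((1 - d - e - κ') / 2) ((1 - d - e + κ') / 2) (1 - e) t = Fm2 d e κ' t from rfl]
    at hEm
  rw [Kwd, Kw]
  linear_combination Fp d e κ' t * hEm - Fm d e κ' t * hEp

end Key

end Aux8

namespace Aux8

lemma key_const (d e κ' : ℂ) (hcp : ∀ k : ℕ, (1 + e) + k ≠ 0)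
    (hcm : ∀ k : ℕ, (1 - e) + k ≠ 0) {t : ℝ} (ht0 : 0 < t) (ht1 : t < 1) :
    ((1 - t : ℝ):ℂ) ^ (1 - d) * Kw d e κ' t = -e := by
  set G : ℝ → ℂ := fun s => (((1 - s : ℝ)):ℂ) ^ (1 - d) * Kw d e κ' s with hGdef
  have hG : ∀ s : ℝ, |s| < 1 → HasDerivAt G 0 s := by
    intro s hs
    rw [abs_lt] at hs
    have h1s : (0:ℝ) < 1 - s := by linarith
    have hne : ((1 - s : ℝ):ℂ) ≠ 0 := by
      simpa using Complex.ofReal_ne_zero.2 (ne_of_gt h1s)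
    have hbase : HasDerivAt (fun s : ℝ => ((1 - s : ℝ):ℂ)) (-1 : ℂ) s := by
      have : HasDerivAt (fun s : ℝ => (1 - s : ℝ)) (-1) s := by
        simpa using (hasDerivAt_id s).const_sub 1
      exact_mod_cast this.ofReal_comp
    have hpow : HasDerivAt (fun s : ℝ => ((1 - s : ℝ):ℂ) ^ (1 - d))
        ((1 - d) * ((1 - s : ℝ):ℂ) ^ (1 - d - 1) * (-1)) s := by
      have hout := (Complex.hasStrictDerivAt_cpow_const (c := 1 - d)
        (Complex.ofReal_mem_slitPlane.2 h1s)).hasDerivAt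
      exact hout.comp s hbase
    have hKd := Kw_hasDerivAt d e κ' hcp hcm (abs_lt.2 hs)
    have hmul := hpow.mul hKd
    have hval : (1 - d) * ((1 - s : ℝ):ℂ) ^ (1 - d - 1) * (-1) * Kw d e κ' s
        + ((1 - s : ℝ):ℂ) ^ (1 - d) * Kwd d e κ' s = 0 := by
      have hid := Kw_deriv_identity d e κ' hcp hcm (abs_lt.2 hs)
      have hsplit : ((1 - s : ℝ):ℂ) ^ (1 - d) = ((1 - s : ℝ):ℂ) ^ (1 - d - 1) * ((1 - s : ℝ):ℂ) := by
        have h := Complex.cpow_add (x := ((1 - s : ℝ):ℂ)) (1 - d - 1) 1 hne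
        rw [Complex.cpow_one, show (1 - d - 1) + (1:ℂ) = 1 - d by ring] at h
        exact h
      rw [hsplit]
      have hcast : ((1 - s : ℝ):ℂ) = 1 - ((s:ℝ):ℂ) := by push_cast; ring
      rw [hcast]
      linear_combination (1 - ((s:ℝ):ℂ)) ^ (1 - d - 1) * hid
    rw [hGdef]
    have := hval ▸ hmul
    exact hmul.congr_deriv hval
  have hconst := constant_of_has_deriv_right_zero (f := G) (a := 0) (b := t)
    (fun s hs => by
      have : |s| < 1 := by
        rw [Set.mem_Icc] at hs
        rw [abs_lt]; constructor <;> linarith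
      exact (hG s this).continuousAt.continuousWithinAt)
    (fun s hs => by
      have : |s| < 1 := by
        rw [Set.mem_Ico] at hs
        rw [abs_lt]; constructor <;> linarith
      exact (hG s this).hasDerivWithinAt)
  have := hconst t (Set.mem_Icc.2 ⟨ht0.le, le_refl t⟩)
  rw [hGdef] at this
  simp only at this
  rw [this]
  have hK0 : Kw d e κ' 0 = -e := by
    rw [Kw, Fm, Fp, FFa_zero, FFa_zero]
    push_cast
    ring
  rw [hK0]
  norm_num

end Aux8

namespace Aux8

lemma cpow_split (z : ℂ) (hz : z ≠ 0) (w : ℂ) : z ^ w = z ^ (w - 1) * z := by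
  have h := Complex.cpow_add (w - 1) 1 hz
  rw [Complex.cpow_one] at h
  rw [show w - 1 + 1 = w by ring] at h
  exact h

lemma phiLike_hasDerivAt (A B a b c : ℂ) (hc : ∀ k : ℕ, c + k ≠ 0) {x : ℝ}
    (hx1 : -1 < x) (hx2 : x < 1) :
    HasDerivAt (fun y : ℝ => (((1 - y) / 2 : ℝ) : ℂ) ^ A * (((1 + y) / 2 : ℝ) : ℂ) ^ B
        * FFa a b c ((1 + y) / 2))
      (A * (((1 - x) / 2 : ℝ) : ℂ) ^ (A - 1) * (-(1/2) : ℂ) * ((((1 + x) / 2 : ℝ) : ℂ) ^ B)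
          * FFa a b c ((1 + x) / 2)
        + (((1 - x) / 2 : ℝ) : ℂ) ^ A * (B * (((1 + x) / 2 : ℝ) : ℂ) ^ (B - 1) * ((1/2) : ℂ))
          * FFa a b c ((1 + x) / 2)
        + (((1 - x) / 2 : ℝ) : ℂ) ^ A * ((((1 + x) / 2 : ℝ) : ℂ) ^ B)
          * (FF1a a b c ((1 + x) / 2) * ((1/2) : ℂ))) x := by
  have hv : 0 < (1 - x) / 2 := by linarith
  have hu : 0 < (1 + x) / 2 := by linarith
  have habs : |(1 + x) / 2| < 1 := by rw [abs_lt]; constructor <;> linarith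
  -- inner real derivatives
  have hir1 : HasDerivAt (fun y : ℝ => (1 - y) / 2) (-(1/2)) x := by
    have := ((hasDerivAt_id x).const_sub 1).div_const 2
    exact this.congr_deriv (by norm_num)
  have hir2 : HasDerivAt (fun y : ℝ => (1 + y) / 2) (1/2) x := by
    have := ((hasDerivAt_id x).const_add 1).div_const 2
    exact this.congr_deriv (by norm_num)
  have h1 : HasDerivAt (fun y : ℝ => (((1 - y) / 2 : ℝ) : ℂ)) ((-(1/2) : ℝ) : ℂ) x :=
    hir1.ofReal_comp
  have h2 : HasDerivAt (fun y : ℝ => (((1 + y) / 2 : ℝ) : ℂ)) (((1/2 : ℝ)) : ℂ) x :=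
    hir2.ofReal_comp
  have hcpA : HasDerivAt (fun y : ℝ => (((1 - y) / 2 : ℝ) : ℂ) ^ A)
      (A * (((1 - x) / 2 : ℝ) : ℂ) ^ (A - 1) * ((-(1/2) : ℝ) : ℂ)) x := by
    have hout := (Complex.hasStrictDerivAt_cpow_const (c := A)
      (Complex.ofReal_mem_slitPlane.2 hv)).hasDerivAt
    exact hout.comp x h1
  have hcpB : HasDerivAt (fun y : ℝ => (((1 + y) / 2 : ℝ) : ℂ) ^ B)
      (B * (((1 + x) / 2 : ℝ) : ℂ) ^ (B - 1) * (((1/2) : ℝ) : ℂ)) x := by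
    have hout := (Complex.hasStrictDerivAt_cpow_const (c := B)
      (Complex.ofReal_mem_slitPlane.2 hu)).hasDerivAt
    exact hout.comp x h2
  have hF : HasDerivAt (fun y : ℝ => FFa a b c ((1 + y) / 2))
      ((1/2 : ℝ) • FF1a a b c ((1 + x) / 2)) x :=
    by have := (FFa_hasDerivAt a b c hc habs).scomp x hir2; exact this
  have htot := (hcpA.mul hcpB).mul hF
  refine htot.congr_deriv ?_
  rw [Complex.real_smul, Pi.mul_apply]
  push_cast
  ring

end Aux8


open Aux8

/-- the weighted Wronskian `[φ⁻_λ, φ⁺_λ] = −η D`, with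
`D = 2^{α+β+3} C`, at every point of `(-1,1)`. -/
theorem stmt_8 (α β : ℝ) (hα : -1 < α) (hβ : -1 < β) (κ lam δ η : ℂ)
    (hδ : δ ^ 2 = lam + ((α : ℂ) + 1) ^ 2) (hη : η ^ 2 = lam + ((β : ℂ) + 1) ^ 2)
    (hηZ : ∀ k : ℤ, η ≠ (k : ℂ)) :
    ∀ x ∈ Set.Ioo (-1 : ℝ) 1,
      (pfun α β x : ℂ) *
          (deriv (phiP α β κ δ (-η)) x * phiP α β κ δ η x
            - phiP α β κ δ (-η) x * deriv (phiP α β κ δ η) x)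
        = -η * ((2 ^ (α + β + 3) * Cconst α β : ℝ) : ℂ) := by
  intro x hx
  obtain ⟨hx1, hx2⟩ := hx
  have hv : 0 < (1 - x) / 2 := by linarith
  have hu : 0 < (1 + x) / 2 := by linarith
  have hu1 : (1 + x) / 2 < 1 := by linarith
  have hVne : (((1 - x) / 2 : ℝ) : ℂ) ≠ 0 := Complex.ofReal_ne_zero.2 (ne_of_gt hv)
  have hUne : (((1 + x) / 2 : ℝ) : ℂ) ≠ 0 := Complex.ofReal_ne_zero.2 (ne_of_gt hu)
  have hcp : ∀ k : ℕ, (1 + η) + (k : ℂ) ≠ 0 := by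
    intro k h
    apply hηZ (-(k + 1))
    push_cast
    linear_combination h
  have hcm : ∀ k : ℕ, (1 - η) + (k : ℂ) ≠ 0 := by
    intro k h
    apply hηZ (k + 1)
    push_cast
    linear_combination -h
  have hphip : phiP α β κ δ η = fun y : ℝ =>
      (((1 - y) / 2 : ℝ) : ℂ) ^ (-((α : ℂ) + δ + 1) / 2)
        * (((1 + y) / 2 : ℝ) : ℂ) ^ (-((β : ℂ) - η + 1) / 2)
        * FFa ((1 - δ + η - κ) / 2) ((1 - δ + η + κ) / 2) (1 + η) ((1 + y) / 2) := rfl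
  have hphim : phiP α β κ δ (-η) = fun y : ℝ =>
      (((1 - y) / 2 : ℝ) : ℂ) ^ (-((α : ℂ) + δ + 1) / 2)
        * (((1 + y) / 2 : ℝ) : ℂ) ^ (-((β : ℂ) + η + 1) / 2)
        * FFa ((1 - δ - η - κ) / 2) ((1 - δ - η + κ) / 2) (1 - η) ((1 + y) / 2) := by
    funext y
    simp only [phiP]
    rw [show (-((β : ℂ) - -η + 1) / 2) = (-((β : ℂ) + η + 1) / 2) by ring,
      show ((1 - δ + -η - κ) / 2 : ℂ) = (1 - δ - η - κ) / 2 by ring,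
      show ((1 - δ + -η + κ) / 2 : ℂ) = (1 - δ - η + κ) / 2 by ring,
      show ((1 : ℂ) + -η) = 1 - η by ring]
    rfl
  simp only [hphip, hphim]
  have hp := phiLike_hasDerivAt (-((α : ℂ) + δ + 1) / 2) (-((β : ℂ) - η + 1) / 2)
    ((1 - δ + η - κ) / 2) ((1 - δ + η + κ) / 2) (1 + η) hcp hx1 hx2
  have hm := phiLike_hasDerivAt (-((α : ℂ) + δ + 1) / 2) (-((β : ℂ) + η + 1) / 2)
    ((1 - δ - η - κ) / 2) ((1 - δ - η + κ) / 2) (1 - η) hcm hx1 hx2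
  rw [hp.deriv, hm.deriv]
  -- expand pfun
  have e1 : ((1 : ℝ) - x) ^ (α + 2) = (2:ℝ) ^ (α + 2) * ((1 - x) / 2) ^ (α + 2) := by
    rw [← Real.mul_rpow (by norm_num) hv.le, show (2:ℝ) * ((1 - x) / 2) = 1 - x by ring]
  have e2 : ((1 : ℝ) + x) ^ (β + 2) = (2:ℝ) ^ (β + 2) * ((1 + x) / 2) ^ (β + 2) := by
    rw [← Real.mul_rpow (by norm_num) hu.le, show (2:ℝ) * ((1 + x) / 2) = 1 + x by ring]
  have hpf : ((pfun α β x : ℝ) : ℂ)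
      = ((Cconst α β : ℝ) : ℂ) * (((2:ℝ) ^ (α + 2) : ℝ) : ℂ) * (((2:ℝ) ^ (β + 2) : ℝ) : ℂ) * (((1 - x) / 2 : ℝ) : ℂ) ^ ((α : ℂ) + 2) * (((1 + x) / 2 : ℝ) : ℂ) ^ ((β : ℂ) + 2) := by
    rw [pfun, e1, e2, Complex.ofReal_mul, Complex.ofReal_mul, Complex.ofReal_mul,
      Complex.ofReal_mul, Complex.ofReal_cpow hv.le, Complex.ofReal_cpow hu.le,
      show ((α + 2 : ℝ) : ℂ) = (α : ℂ) + 2 by push_cast; ring,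
      show ((β + 2 : ℝ) : ℂ) = (β : ℂ) + 2 by push_cast; ring]
    ring
  rw [hpf]
  rw [show ((2 ^ (α + β + 3) * Cconst α β : ℝ) : ℂ)
    = (((2:ℝ) ^ (α + β + 3) : ℝ) : ℂ) * ((Cconst α β : ℝ) : ℂ) from by rw [Complex.ofReal_mul]]
  -- split composite powers
  rw [cpow_split (((1 - x) / 2 : ℝ) : ℂ) hVne (-((α : ℂ) + δ + 1) / 2),
    cpow_split (((1 + x) / 2 : ℝ) : ℂ) hUne (-((β : ℂ) - η + 1) / 2),
    cpow_split (((1 + x) / 2 : ℝ) : ℂ) hUne (-((β : ℂ) + η + 1) / 2)]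
  have hUB2 : (((1 + x) / 2 : ℝ) : ℂ) ^ ((β : ℂ) + 2) = (((1 + x) / 2 : ℝ) : ℂ) ^ ((β : ℂ) + 1) * (((1 + x) / 2 : ℝ) : ℂ) := by
    have h := cpow_split (((1 + x) / 2 : ℝ) : ℂ) hUne ((β : ℂ) + 2)
    rw [show ((β : ℂ) + 2 - 1) = (β : ℂ) + 1 by ring] at h
    exact h
  rw [hUB2]
  -- power relations
  have Rv : (((1 - x) / 2 : ℝ) : ℂ) ^ ((α : ℂ) + 2) * (((1 - x) / 2 : ℝ) : ℂ) ^ ((-((α : ℂ) + δ + 1) / 2) - 1) * (((1 - x) / 2 : ℝ) : ℂ) ^ ((-((α : ℂ) + δ + 1) / 2) - 1) * (((1 - x) / 2 : ℝ) : ℂ) * (((1 - x) / 2 : ℝ) : ℂ) = (((1 - x) / 2 : ℝ) : ℂ) ^ (1 - δ) := by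
    calc (((1 - x) / 2 : ℝ) : ℂ) ^ ((α : ℂ) + 2) * (((1 - x) / 2 : ℝ) : ℂ) ^ ((-((α : ℂ) + δ + 1) / 2) - 1) * (((1 - x) / 2 : ℝ) : ℂ) ^ ((-((α : ℂ) + δ + 1) / 2) - 1) * (((1 - x) / 2 : ℝ) : ℂ) * (((1 - x) / 2 : ℝ) : ℂ)
        = (((1 - x) / 2 : ℝ) : ℂ) ^ ((α : ℂ) + 2) * (((1 - x) / 2 : ℝ) : ℂ) ^ ((-((α : ℂ) + δ + 1) / 2) - 1) * (((1 - x) / 2 : ℝ) : ℂ) ^ ((-((α : ℂ) + δ + 1) / 2) - 1) * (((1 - x) / 2 : ℝ) : ℂ) ^ (1:ℂ) * (((1 - x) / 2 : ℝ) : ℂ) ^ (1:ℂ) := by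
          rw [Complex.cpow_one]
      _ = (((1 - x) / 2 : ℝ) : ℂ) ^ (((α : ℂ) + 2) + ((-((α : ℂ) + δ + 1) / 2) - 1) + ((-((α : ℂ) + δ + 1) / 2) - 1) + 1 + 1) := by
          rw [← Complex.cpow_add _ _ hVne, ← Complex.cpow_add _ _ hVne,
            ← Complex.cpow_add _ _ hVne, ← Complex.cpow_add _ _ hVne]
      _ = (((1 - x) / 2 : ℝ) : ℂ) ^ (1 - δ) := by
          rw [show (((α : ℂ) + 2) + ((-((α : ℂ) + δ + 1) / 2) - 1) + ((-((α : ℂ) + δ + 1) / 2) - 1) + 1 + 1) = 1 - δ by ring]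
  have Ru : (((1 + x) / 2 : ℝ) : ℂ) ^ ((β : ℂ) + 1) * (((1 + x) / 2 : ℝ) : ℂ) ^ ((-((β : ℂ) - η + 1) / 2) - 1) * (((1 + x) / 2 : ℝ) : ℂ) ^ ((-((β : ℂ) + η + 1) / 2) - 1) * (((1 + x) / 2 : ℝ) : ℂ) * (((1 + x) / 2 : ℝ) : ℂ) = 1 := by
    calc (((1 + x) / 2 : ℝ) : ℂ) ^ ((β : ℂ) + 1) * (((1 + x) / 2 : ℝ) : ℂ) ^ ((-((β : ℂ) - η + 1) / 2) - 1) * (((1 + x) / 2 : ℝ) : ℂ) ^ ((-((β : ℂ) + η + 1) / 2) - 1) * (((1 + x) / 2 : ℝ) : ℂ) * (((1 + x) / 2 : ℝ) : ℂ)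
        = (((1 + x) / 2 : ℝ) : ℂ) ^ ((β : ℂ) + 1) * (((1 + x) / 2 : ℝ) : ℂ) ^ ((-((β : ℂ) - η + 1) / 2) - 1) * (((1 + x) / 2 : ℝ) : ℂ) ^ ((-((β : ℂ) + η + 1) / 2) - 1) * (((1 + x) / 2 : ℝ) : ℂ) ^ (1:ℂ) * (((1 + x) / 2 : ℝ) : ℂ) ^ (1:ℂ) := by
          rw [Complex.cpow_one]
      _ = (((1 + x) / 2 : ℝ) : ℂ) ^ (((β : ℂ) + 1) + ((-((β : ℂ) - η + 1) / 2) - 1) + ((-((β : ℂ) + η + 1) / 2) - 1) + 1 + 1) := by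
          rw [← Complex.cpow_add _ _ hUne, ← Complex.cpow_add _ _ hUne,
            ← Complex.cpow_add _ _ hUne, ← Complex.cpow_add _ _ hUne]
      _ = 1 := by
          rw [show (((β : ℂ) + 1) + ((-((β : ℂ) - η + 1) / 2) - 1) + ((-((β : ℂ) + η + 1) / 2) - 1) + 1 + 1) = 0 by ring,
            Complex.cpow_zero]
  have keyc := key_const δ η κ hcp hcm hu hu1
  rw [show (1 - (1 + x) / 2 : ℝ) = (1 - x) / 2 by ring] at keyc
  simp only [Kw, Fm, Fp, Fm1, Fp1] at keyc
  have hS2 : (((2:ℝ) ^ (α + 2) : ℝ) : ℂ) * (((2:ℝ) ^ (β + 2) : ℝ) : ℂ) = 2 * (((2:ℝ) ^ (α + β + 3) : ℝ) : ℂ) := by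
    rw [← Complex.ofReal_mul, ← Real.rpow_add (by norm_num : (0:ℝ) < 2),
      show α + 2 + (β + 2) = (α + β + 3) + 1 by ring,
      Real.rpow_add (by norm_num : (0:ℝ) < 2), Real.rpow_one, Complex.ofReal_mul]
    push_cast
    ring
  linear_combination
    ((1/2 : ℂ) * ((Cconst α β : ℝ) : ℂ) * (((2:ℝ) ^ (α + 2) : ℝ) : ℂ) * (((2:ℝ) ^ (β + 2) : ℝ) : ℂ) * (((1 + x) / 2 : ℝ) : ℂ) ^ ((β : ℂ) + 1) * (((1 + x) / 2 : ℝ) : ℂ) ^ ((-((β : ℂ) - η + 1) / 2) - 1) * (((1 + x) / 2 : ℝ) : ℂ) ^ ((-((β : ℂ) + η + 1) / 2) - 1) * (((1 + x) / 2 : ℝ) : ℂ) * (((1 + x) / 2 : ℝ) : ℂ) * (-η * FFa ((1 - δ - η - κ) / 2) ((1 - δ - η + κ) / 2) (1 - η) ((1 + x) / 2) * FFa ((1 - δ + η - κ) / 2) ((1 - δ + η + κ) / 2) (1 + η) ((1 + x) / 2) + (((1 + x) / 2 : ℝ) : ℂ) * (FF1a ((1 - δ - η - κ) / 2) ((1 -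 δ - η + κ) / 2) (1 - η) ((1 + x) / 2) * FFa ((1 - δ + η - κ) / 2) ((1 - δ + η + κ) / 2) (1 + η) ((1 + x) / 2) - FFa ((1 - δ - η - κ) / 2) ((1 - δ - η + κ) / 2) (1 - η) ((1 + x) / 2) * FF1a ((1 - δ + η - κ) / 2) ((1 - δ + η + κ) / 2) (1 + η) ((1 + x) / 2)))) * Rv
    + ((1/2 : ℂ) * ((Cconst α β : ℝ) : ℂ) * (((2:ℝ) ^ (α + 2) : ℝ) : ℂ) * (((2:ℝ) ^ (β + 2) : ℝ) : ℂ) * (((1 - x) / 2 : ℝ) : ℂ) ^ (1 - δ) * (-η * FFa ((1 - δ - η - κ) / 2) ((1 - δ - η + κ) / 2) (1 - η) ((1 + x) / 2) * FFa ((1 - δ + η - κ) / 2) ((1 - δ + η + κ) / 2) (1 + η) ((1 + x) / 2) + (((1 + x) / 2 : ℝ) : ℂ) * (FF1a ((1 - δ - η - κ) / 2) ((1 - δ - η + κ) / 2) (1 - η) ((1 + x) / 2) * FFa ((1 - δ + η - κ) / 2) ((1 - δ + η + κ) / 2) (1 + η) ((1 + x) / 2) - FFa ((1 - δ - η - κ)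 / 2) ((1 - δ - η + κ) / 2) (1 - η) ((1 + x) / 2) * FF1a ((1 - δ + η - κ) / 2) ((1 - δ + η + κ) / 2) (1 + η) ((1 + x) / 2)))) * Ru
    + ((1/2 : ℂ) * ((Cconst α β : ℝ) : ℂ) * (((2:ℝ) ^ (α + 2) : ℝ) : ℂ) * (((2:ℝ) ^ (β + 2) : ℝ) : ℂ)) * keyc
    + (-(1/2 : ℂ) * ((Cconst α β : ℝ) : ℂ) * η) * hS2
end
end

section
/- Let −1 < α ≤ β and let κ be either a nonnegative real number or a purely imaginary number (so κ² ∈ ℝ). Suppose f : (−1,1) → ℂ is twice continuously differentiable, satisfies (Tf)(x) = i·f(x) for all x ∈ (−1,1) (or satisfies (Tf)(x) = −i·f(x) for all x), and satisfies ∫_{−1}^1 |f(x)|² w^{(α,β)}(x) dx < ∞. Then f is identically zero. (Hence the minimal operator T has deficiency indices (0,0) and a unique self-adjoint extension.) -/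
noncomputable section
open MeasureTheory Asymptotics Filter

open Set

lemma Cconst_pos {α β : ℝ} (hα : -1 < α) (hβ : -1 < β) : 0 < Cconst α β := by
  have h1 : 0 < Real.Gamma (α + 1) := Real.Gamma_pos_of_pos (by linarith)
  have h2 : 0 < Real.Gamma (β + 1) := Real.Gamma_pos_of_pos (by linarith)
  have h3 : 0 < Real.Gamma (α + β + 2) := Real.Gamma_pos_of_pos (by linarith)
  have h4 : (0:ℝ) < 2 ^ (-α - β - 1) := Real.rpow_pos_of_pos (by norm_num) _
  unfold Cconst
  positivity

lemma wJ_pos {α β : ℝ} (hα : -1 < α) (hβ : -1 < β) {x : ℝ} (hx : x ∈ Ioo (-1:ℝ) 1) :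
    0 < wJ α β x := by
  have h1 : (0:ℝ) < 1 - x := by linarith [hx.2]
  have h2 : (0:ℝ) < 1 + x := by linarith [hx.1]
  have := Cconst_pos hα hβ
  unfold wJ Cconst at *
  positivity

lemma pfun_pos {α β : ℝ} (hα : -1 < α) (hβ : -1 < β) {x : ℝ} (hx : x ∈ Ioo (-1:ℝ) 1) :
    0 < pfun α β x := by
  have h1 : (0:ℝ) < 1 - x := by linarith [hx.2]
  have h2 : (0:ℝ) < 1 + x := by linarith [hx.1]
  have := Cconst_pos hα hβ
  unfold pfun
  positivity

lemma pfun_eq {α β : ℝ} {x : ℝ} (hx : x ∈ Ioo (-1:ℝ) 1) :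
    pfun α β x = wJ α β x * (1 - x^2)^2 := by
  have h1 : (0:ℝ) < 1 - x := by linarith [hx.2]
  have h2 : (0:ℝ) < 1 + x := by linarith [hx.1]
  unfold pfun wJ Cconst
  rw [show α + 2 = α + (2:ℕ) by norm_num, show β + 2 = β + (2:ℕ) by norm_num,
    Real.rpow_add h1, Real.rpow_add h2, Real.rpow_natCast, Real.rpow_natCast]
  ring


lemma rpow_shift {u : ℝ} (hu : 0 < u) (a : ℝ) :
    u ^ (a + 1) = u ^ a * u ∧ u ^ (a + 2) = u ^ a * u^2 := by
  constructor
  · rw [Real.rpow_add hu, Real.rpow_one]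
  · rw [show a + 2 = a + (2:ℕ) by norm_num, Real.rpow_add hu, Real.rpow_natCast]

lemma hasDerivAt_pfun {α β : ℝ} {x : ℝ} (hx : x ∈ Ioo (-1:ℝ) 1) :
    HasDerivAt (pfun α β) (wJ α β x * (1 - x^2) * (β - α - (α + β + 4) * x)) x := by
  have h1 : (0:ℝ) < 1 - x := by linarith [hx.2]
  have h2 : (0:ℝ) < 1 + x := by linarith [hx.1]
  have hu : HasDerivAt (fun y : ℝ => (1 - y) ^ (α + 2))
      ((α + 2) * (1 - x) ^ (α + 1) * (-1)) x := by
    have := (Real.hasDerivAt_rpow_const (x := 1 - x) (p := α + 2) (Or.inl h1.ne')).comp x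
      ((hasDerivAt_const x (1:ℝ)).sub (hasDerivAt_id x))
    simpa [Function.comp_def, show α + 2 - 1 = α + 1 by ring] using this
  have hv : HasDerivAt (fun y : ℝ => (1 + y) ^ (β + 2))
      ((β + 2) * (1 + x) ^ (β + 1) * 1) x := by
    have := (Real.hasDerivAt_rpow_const (x := 1 + x) (p := β + 2) (Or.inl h2.ne')).comp x
      ((hasDerivAt_const x (1:ℝ)).add (hasDerivAt_id x))
    simpa [Function.comp_def, show β + 2 - 1 = β + 1 by ring] using this
  have hprod := ((hu.const_mul (Cconst α β)).mul hv)
  have heq : Cconst α β * ((α + 2) * (1 - x) ^ (α + 1) * (-1)) * (1 + x) ^ (β + 2)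
      + Cconst α β * (1 - x) ^ (α + 2) * ((β + 2) * (1 + x) ^ (β + 1) * 1)
      = wJ α β x * (1 - x^2) * (β - α - (α + β + 4) * x) := by
    obtain ⟨e1, e2⟩ := rpow_shift h1 α
    obtain ⟨e3, e4⟩ := rpow_shift h2 β
    rw [e1, e2, e3, e4, show wJ α β x = Cconst α β * (1-x)^α * (1+x)^β from rfl]
    ring
  rw [← heq]
  exact hprod

def qfun (α β : ℝ) (κ : ℂ) (x : ℝ) : ℝ := (1/4) * ((κ^2).re - (α+β+3)^2) * (1 - x^2)

def gfun (α β : ℝ) (f : ℝ → ℂ) (x : ℝ) : ℝ :=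
  pfun α β x * (deriv f x * (starRingEnd ℂ) (f x)).im

def hfun (α β : ℝ) (f : ℝ → ℂ) (x : ℝ) : ℝ :=
  pfun α β x * (deriv f x * (starRingEnd ℂ) (f x)).re


lemma key_deriv (α β : ℝ) (κ : ℂ) (hκim : (κ^2).im = 0) (f : ℝ → ℂ)
    (hf : ContDiffOn ℝ 2 f (Ioo (-1:ℝ) 1)) (ε : ℝ)
    (heig : ∀ x ∈ Ioo (-1:ℝ) 1, Tdiff α β κ f x = (ε:ℂ) * Complex.I * f x)
    {x : ℝ} (hx : x ∈ Ioo (-1:ℝ) 1) :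
    HasDerivAt (gfun α β f) (ε * (‖f x‖^2 * wJ α β x)) x ∧
    HasDerivAt (hfun α β f)
      (-(qfun α β κ x) * (‖f x‖^2 * wJ α β x) + pfun α β x * ‖deriv f x‖^2) x := by
  have hopen : IsOpen (Ioo (-1:ℝ) 1) := isOpen_Ioo
  have hf1 : HasDerivAt f (deriv f x) x :=
    ((hf.differentiableOn (by norm_num)).differentiableAt (hopen.mem_nhds hx)).hasDerivAt
  have hfd : ContDiffOn ℝ 1 (deriv f) (Ioo (-1:ℝ) 1) :=
    hf.deriv_of_isOpen hopen (by norm_num)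
  have hf2 : HasDerivAt (deriv f) (deriv (deriv f) x) x :=
    ((hfd.differentiableOn (by norm_num)).differentiableAt (hopen.mem_nhds hx)).hasDerivAt
  have hconj : HasDerivAt (fun y => (starRingEnd ℂ) (f y))
      ((starRingEnd ℂ) (deriv f x)) x := by
    have := (Complex.conjCLE.toContinuousLinearMap.hasFDerivAt
      (x := f x)).comp_hasDerivAt x hf1
    simpa [Function.comp_def, Complex.conjCAE_apply] using this
  have hinner := hf2.mul hconj
  have hp := (hasDerivAt_pfun (α := α) (β := β) hx).ofReal_comp
  have hP := hp.mul hinner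
  -- the complex coefficient identity
  have hq : (1/4 : ℂ) * (κ^2 - ((α:ℂ) + (β:ℂ) + 3)^2) * ((1 - x^2 : ℝ) : ℂ)
      = ((qfun α β κ x : ℝ) : ℂ) := by
    have hκ2 : (κ^2 : ℂ) = (((κ^2).re : ℝ) : ℂ) := by
      apply Complex.ext
      · simp
      · simp [hκim]
    rw [hκ2]
    unfold qfun
    push_cast
    ring
  have hT := heig x hx
  unfold Tdiff at hT
  rw [hq] at hT
  have hkey : ((wJ α β x * (1 - x^2) * (β - α - (α + β + 4) * x) : ℝ) : ℂ) * deriv f x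
      + ((pfun α β x : ℝ) : ℂ) * deriv (deriv f) x
      = ((wJ α β x : ℝ) : ℂ) * (((ε:ℂ) * Complex.I - ((qfun α β κ x : ℝ):ℂ)) * f x) := by
    rw [pfun_eq hx]
    push_cast at hT ⊢
    linear_combination ((wJ α β x : ℝ) : ℂ) * hT
  set D : ℂ := ((wJ α β x * (1 - x^2) * (β - α - (α + β + 4) * x) : ℝ) : ℂ) *
      (deriv f x * (starRingEnd ℂ) (f x))
    + ((pfun α β x : ℝ):ℂ) * (deriv (deriv f) x * (starRingEnd ℂ) (f x)
        + deriv f x * (starRingEnd ℂ) (deriv f x)) with hDdef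
  have hD : D = ((wJ α β x : ℝ):ℂ) * ((ε:ℂ) * Complex.I - ((qfun α β κ x : ℝ):ℂ))
      * ((Complex.normSq (f x) : ℝ) : ℂ)
      + ((pfun α β x * Complex.normSq (deriv f x) : ℝ) : ℂ) := by
    rw [hDdef]
    push_cast
    push_cast at hkey
    linear_combination ((starRingEnd ℂ) (f x)) * hkey
      + ((pfun α β x : ℝ) : ℂ) * Complex.mul_conj (deriv f x)
      + ((wJ α β x : ℝ):ℂ) * ((ε:ℂ) * Complex.I - ((qfun α β κ x : ℝ):ℂ)) *
          Complex.mul_conj (f x)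
  constructor
  · have hg0 : HasDerivAt (fun y => ((pfun α β y : ℝ):ℂ)
        * (deriv f y * (starRingEnd ℂ) (f y))) D x := hP
    have hg1 := (Complex.imCLM.hasFDerivAt (x := ((pfun α β x : ℝ):ℂ) * (deriv f x * (starRingEnd ℂ) (f x)))).comp_hasDerivAt x hg0
    have hfun_eq : (⇑Complex.imCLM ∘ fun y => ((pfun α β y : ℝ):ℂ)
        * (deriv f y * (starRingEnd ℂ) (f y))) = gfun α β f := by
      funext y
      simp [Function.comp, gfun, Complex.mul_im]
    rw [hfun_eq] at hg1
    refine hg1.congr_deriv ?_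
    symm
    rw [hD]
    simp [Complex.add_im, Complex.mul_im, Complex.mul_re, Complex.normSq_eq_norm_sq,
      ← Complex.ofReal_pow]
    ring
  · have hg0 : HasDerivAt (fun y => ((pfun α β y : ℝ):ℂ)
        * (deriv f y * (starRingEnd ℂ) (f y))) D x := hP
    have hg1 := (Complex.reCLM.hasFDerivAt (x := ((pfun α β x : ℝ):ℂ) * (deriv f x * (starRingEnd ℂ) (f x)))).comp_hasDerivAt x hg0
    have hfun_eq : (⇑Complex.reCLM ∘ fun y => ((pfun α β y : ℝ):ℂ)
        * (deriv f y * (starRingEnd ℂ) (f y))) = hfun α β f := by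
      funext y
      simp [Function.comp, hfun, Complex.mul_re]
    rw [hfun_eq] at hg1
    refine hg1.congr_deriv ?_
    symm
    rw [hD]
    simp [Complex.add_re, Complex.mul_im, Complex.mul_re, Complex.normSq_eq_norm_sq,
      ← Complex.ofReal_pow]
    ring

lemma wJ_continuousOn {α β : ℝ} : ContinuousOn (wJ α β) (Ioo (-1:ℝ) 1) := by
  unfold wJ
  apply ContinuousOn.mul
  apply ContinuousOn.mul continuousOn_const
  · exact (continuousOn_const.sub continuousOn_id).rpow_const
      (fun x hx => Or.inl (by show (1:ℝ) - x ≠ 0; intro h; nlinarith [hx.2, hx.1]))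
  · exact (continuousOn_const.add continuousOn_id).rpow_const
      (fun x hx => Or.inl (by show (1:ℝ) + x ≠ 0; intro h; nlinarith [hx.2, hx.1]))

lemma rho_continuousOn {α β : ℝ} {f : ℝ → ℂ} (hf : ContDiffOn ℝ 2 f (Ioo (-1:ℝ) 1)) :
    ContinuousOn (fun x => ‖f x‖^2 * wJ α β x) (Ioo (-1:ℝ) 1) :=
  ((hf.continuousOn.norm).pow 2).mul wJ_continuousOn

set_option maxHeartbeats 1000000 in
lemma endpoint (α β : ℝ) (hα : -1 < α) (hβ : -1 < β) (κ : ℂ) (hκim : (κ^2).im = 0)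
    (f : ℝ → ℂ) (hf : ContDiffOn ℝ 2 f (Ioo (-1:ℝ) 1)) (ε : ℝ)
    (heig : ∀ x ∈ Ioo (-1:ℝ) 1, Tdiff α β κ f x = (ε:ℂ) * Complex.I * f x)
    (hL2 : IntegrableOn (fun x => ‖f x‖^2 * wJ α β x) (Ioo (-1:ℝ) 1))
    (b : ℝ) (hb0 : 0 ≤ b) (hb1 : b < 1) (c : ℝ) (hc : 0 < c)
    (hg : ∀ x ∈ Ico b 1, c ≤ |gfun α β f x|) : False := by
  have hρcont := rho_continuousOn (α := α) (β := β) hf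
  set ρ : ℝ → ℝ := fun x => ‖f x‖^2 * wJ α β x with hρdef
  have hsub : Ico b 1 ⊆ Ioo (-1:ℝ) 1 := fun x hx => ⟨by linarith [hx.1], hx.2⟩
  have hρ0 : ∀ x ∈ Ioo (-1:ℝ) 1, 0 ≤ ρ x :=
    fun x hx => mul_nonneg (by positivity) (wJ_pos hα hβ hx).le
  set M : ℝ := |(κ^2).re - (α+β+3)^2| / 4 with hM
  have hM0 : 0 ≤ M := by positivity
  have hqb : ∀ x ∈ Ioo (-1:ℝ) 1, qfun α β κ x ≤ M := by
    intro x hx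
    have h1 : (0:ℝ) ≤ 1 - x^2 := by nlinarith [hx.1, hx.2]
    have h2 : (1:ℝ) - x^2 ≤ 1 := by nlinarith [sq_nonneg x]
    calc qfun α β κ x ≤ |qfun α β κ x| := le_abs_self _
      _ ≤ M := by
          unfold qfun
          rw [abs_mul, abs_mul, abs_of_nonneg h1, hM]
          have h3 : |(1:ℝ)/4| = 1/4 := by norm_num
          rw [h3]
          nlinarith [abs_nonneg ((κ^2).re - (α+β+3)^2)]
  -- the running integral G
  set G : ℝ → ℝ := fun x => ∫ t in b..x, ρ t with hGdef
  have hGderiv : ∀ x ∈ Ico b 1, HasDerivAt G (ρ x) x := by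
    intro x hx
    have hxI := hsub hx
    apply intervalIntegral.integral_hasDerivAt_right
    · rw [intervalIntegrable_iff_integrableOn_Ioc_of_le hx.1]
      exact hL2.mono_set (fun t ht => ⟨by linarith [ht.1, hx.1], lt_of_le_of_lt ht.2 hx.2⟩)
    · exact ⟨Ioo (-1:ℝ) 1, isOpen_Ioo.mem_nhds hxI,
        hρcont.aestronglyMeasurable measurableSet_Ioo⟩
    · exact hρcont.continuousAt (isOpen_Ioo.mem_nhds hxI)
  set I0 : ℝ := ∫ x in Ioo (-1:ℝ) 1, ρ x with hI0
  have hGle : ∀ x ∈ Ico b 1, G x ≤ I0 := by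
    intro x hx
    rw [hGdef]
    simp only
    rw [intervalIntegral.integral_of_le hx.1]
    apply setIntegral_mono_set hL2
    · exact (ae_restrict_iff' measurableSet_Ioo).mpr (ae_of_all _ hρ0)
    · exact HasSubset.Subset.eventuallyLE
        (fun t ht => ⟨by linarith [ht.1, hx.1], lt_of_le_of_lt ht.2 hx.2⟩)
  -- the monotone functional Φ
  set Φ : ℝ → ℝ := fun x => hfun α β f x + (M+1) * G x + c * Real.log (1-x) with hΦdef
  have hΦderiv : ∀ x ∈ Ico b 1, HasDerivAt Φ
      ((-(qfun α β κ x) * (‖f x‖^2 * wJ α β x) + pfun α β x * ‖deriv f x‖^2)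
        + (M+1) * ρ x + c * (-(1-x)⁻¹)) x := by
    intro x hx
    have hxI := hsub hx
    have h1 := (key_deriv α β κ hκim f hf ε heig hxI).2
    have h2 := hGderiv x hx
    have h3 : HasDerivAt (fun y => Real.log (1-y)) (-(1-x)⁻¹) x := by
      have h1x : (1:ℝ) - x ≠ 0 := by have := hx.2; intro h; nlinarith
      have := (Real.hasDerivAt_log h1x).comp x
        ((hasDerivAt_const x (1:ℝ)).sub (hasDerivAt_id x))
      simpa [Function.comp_def] using this
    exact (h1.add (h2.const_mul (M+1))).add (h3.const_mul c)
  have hΦmono : MonotoneOn Φ (Ico b 1) := by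
    apply monotoneOn_of_deriv_nonneg (convex_Ico b 1)
    · exact fun x hx => ((hΦderiv x hx).differentiableAt).continuousAt.continuousWithinAt
    · rw [interior_Ico]
      exact fun x hx =>
        ((hΦderiv x (Ioo_subset_Ico_self hx)).differentiableAt).differentiableWithinAt
    · rw [interior_Ico]
      intro x hx
      have hx' : x ∈ Ico b 1 := Ioo_subset_Ico_self hx
      have hxI := hsub hx'
      rw [(hΦderiv x hx').deriv]
      have hppos := pfun_pos hα hβ hxI
      set A : ℝ := pfun α β x * ‖deriv f x‖^2 with hA
      set B : ℝ := ‖f x‖^2 * wJ α β x with hB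
      have hA0 : 0 ≤ A := mul_nonneg hppos.le (by positivity)
      have hB0 : 0 ≤ B := hρ0 x hxI
      have h1x : (0:ℝ) < 1 - x := by linarith [hx.2]
      have h1xp : (0:ℝ) < 1 + x := by linarith [hx.1, hb0]
      have hx0 : (0:ℝ) ≤ x := le_trans hb0 hx.1.le
      have hgx := hg x hx'
      have habs : |gfun α β f x| ≤ pfun α β x * (‖deriv f x‖ * ‖f x‖) := by
        unfold gfun
        rw [abs_mul, abs_of_pos hppos]
        have h2 := Complex.abs_im_le_norm (deriv f x * (starRingEnd ℂ) (f x))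
        rw [norm_mul] at h2
        simp only [Complex.norm_conj] at h2
        exact mul_le_mul_of_nonneg_left h2 hppos.le
      have key1 : c^2 ≤ A * B * (1-x^2)^2 := by
        have hcle : c ≤ pfun α β x * (‖deriv f x‖ * ‖f x‖) := le_trans hgx habs
        have h2 : c^2 ≤ (pfun α β x * (‖deriv f x‖ * ‖f x‖))^2 :=
          pow_le_pow_left₀ hc.le hcle 2
        calc c^2 ≤ (pfun α β x * (‖deriv f x‖ * ‖f x‖))^2 := h2
          _ = A * B * (1-x^2)^2 := by
              rw [hA, hB]
              rw [pfun_eq hxI]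
              ring
      have hs0 : (0:ℝ) ≤ 1 - x^2 := by nlinarith
      have hs2 : 1 - x^2 ≤ 2*(1-x) := by nlinarith
      have step1 : c^2 ≤ 4 * (A*B) * (1-x)^2 := by
        nlinarith [key1, mul_nonneg hA0 hB0]
      have hu0 : 0 ≤ (A+B)*(1-x) := mul_nonneg (add_nonneg hA0 hB0) h1x.le
      have step2 : c ≤ (A+B)*(1-x) := by
        nlinarith [step1, sq_nonneg ((A-B)*(1-x)), hu0, hc]
      have step3 : c * (1-x)⁻¹ ≤ A + B := by
        rw [← div_eq_mul_inv, div_le_iff₀ h1x]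
        exact step2
      have hqB : qfun α β κ x * B ≤ M * B := mul_le_mul_of_nonneg_right (hqb x hxI) hB0
      linarith [step3, hqB, hB0]
  -- stage 1 conclusion
  set D : ℝ := Φ b - (M+1) * I0 with hD
  have hstage1 : ∀ x ∈ Ico b 1, D - c * Real.log (1-x) ≤ hfun α β f x := by
    intro x hx
    have h1 := hΦmono (left_mem_Ico.mpr hb1) hx hx.1
    have h2 := hGle x hx
    have h3 : (M+1) * G x ≤ (M+1) * I0 :=
      mul_le_mul_of_nonneg_left h2 (by linarith)
    simp only [hΦdef] at h1
    rw [hD]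
    simp only [hΦdef]
    linarith
  -- stage 2 : hfun ≥ 1 eventually
  have htend1 : Tendsto (fun x : ℝ => 1 - x) (nhdsWithin 1 (Iio 1)) (nhdsWithin 0 (Ioi 0)) := by
    apply tendsto_nhdsWithin_of_tendsto_nhds_of_eventually_within
    · have h0 : Tendsto (fun x : ℝ => 1 - x) (nhds 1) (nhds 0) := by
        have h := Continuous.tendsto (show Continuous (fun x : ℝ => 1 - x) by continuity) 1
        simpa using h
      exact h0.mono_left nhdsWithin_le_nhds
    · filter_upwards [self_mem_nhdsWithin] with x hx
      simp only [mem_Iio] at hx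
      simp only [mem_Ioi]
      linarith
  have hlogtend : Tendsto (fun x : ℝ => D - c * Real.log (1-x))
      (nhdsWithin 1 (Iio 1)) atTop := by
    have h1 : Tendsto (fun x : ℝ => Real.log (1-x)) (nhdsWithin 1 (Iio 1)) atBot :=
      Real.tendsto_log_nhdsGT_zero.comp htend1
    have h2 : Tendsto (fun x : ℝ => c * Real.log (1-x)) (nhdsWithin 1 (Iio 1)) atBot :=
      h1.const_mul_atBot hc
    have h3 : Tendsto (fun x : ℝ => - (c * Real.log (1-x))) (nhdsWithin 1 (Iio 1)) atTop :=
      tendsto_neg_atBot_atTop.comp h2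
    have h4 := tendsto_atTop_add_const_left _ D h3
    simpa [sub_eq_add_neg] using h4
  have hev1 : ∀ᶠ x in nhdsWithin 1 (Iio (1:ℝ)), 1 ≤ hfun α β f x := by
    have hmem : Ico b 1 ∈ nhdsWithin 1 (Iio (1:ℝ)) := by
      rw [mem_nhdsLT_iff_exists_Ioo_subset]
      exact ⟨b, hb1, Ioo_subset_Ico_self⟩
    filter_upwards [hlogtend.eventually_ge_atTop 1, hmem] with x h1 h2
    exact le_trans h1 (hstage1 x h2)
  obtain ⟨l1, hl1, hsub1⟩ := mem_nhdsLT_iff_exists_Ioo_subset.mp hev1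
  simp only [mem_Iio] at hl1
  set b1 : ℝ := max b ((l1+1)/2) with hb1def
  have hb1lt : b1 < 1 := max_lt hb1 (by linarith)
  have hb1ge : b ≤ b1 := le_max_left _ _
  have hb1mem : ∀ x ∈ Ico b1 1, 1 ≤ hfun α β f x := by
    intro x hx
    apply hsub1
    constructor
    · have := le_trans (le_max_right b ((l1+1)/2)) hx.1
      linarith
    · exact hx.2
  have hb1sub : Ico b1 1 ⊆ Ico b 1 := fun x hx => ⟨le_trans hb1ge hx.1, hx.2⟩
  -- derivative of ‖f‖²
  have hopen : IsOpen (Ioo (-1:ℝ) 1) := isOpen_Ioo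
  have hnderiv : ∀ x ∈ Ioo (-1:ℝ) 1, HasDerivAt (fun y => ‖f y‖^2)
      (2 * (deriv f x * (starRingEnd ℂ) (f x)).re) x := by
    intro x hx
    have hf1 : HasDerivAt f (deriv f x) x :=
      ((hf.differentiableOn (by norm_num)).differentiableAt (hopen.mem_nhds hx)).hasDerivAt
    have hre := (Complex.reCLM.hasFDerivAt (x := f x)).comp_hasDerivAt x hf1
    have him := (Complex.imCLM.hasFDerivAt (x := f x)).comp_hasDerivAt x hf1
    have hsum := (hre.mul hre).add (him.mul him)
    have hfeq : (⇑Complex.reCLM ∘ f * ⇑Complex.reCLM ∘ f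
        + ⇑Complex.imCLM ∘ f * ⇑Complex.imCLM ∘ f) = (fun y => ‖f y‖^2) := by
      funext y
      simp only [Pi.add_apply, Pi.mul_apply, Function.comp, Complex.reCLM_apply, Complex.imCLM_apply]
      rw [Complex.sq_norm, Complex.normSq_apply]
    rw [hfeq] at hsum
    refine hsum.congr_deriv ?_
    symm
    simp only [Function.comp, Complex.reCLM_apply, Complex.imCLM_apply, Complex.mul_re,
      Complex.conj_re, Complex.conj_im]
    ring
  -- stage 2 : upper bound for p, growth of ‖f‖²
  have hCpos := Cconst_pos hα hβ
  have h2βpos : (0:ℝ) < 2 ^ (β+2) := Real.rpow_pos_of_pos (by norm_num) _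
  set k : ℝ := 2 / (Cconst α β * 2 ^ (β+2)) with hk
  have hkpos : 0 < k := by positivity
  have hα1 : (0:ℝ) < α + 1 := by linarith
  have hpupper : ∀ x ∈ Ico (0:ℝ) 1, pfun α β x ≤ Cconst α β * 2^(β+2) * (1-x)^(α+2) := by
    intro x hx
    have h1 : (1+x)^(β+2) ≤ 2^(β+2) :=
      Real.rpow_le_rpow (by linarith [hx.1]) (by linarith [hx.2.le]) (by linarith)
    have h2 : (0:ℝ) ≤ (1-x)^(α+2) := Real.rpow_nonneg (by linarith [hx.2]) _
    calc pfun α β x = Cconst α β * (1-x)^(α+2) * (1+x)^(β+2) := rfl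
      _ ≤ Cconst α β * (1-x)^(α+2) * 2^(β+2) :=
          mul_le_mul_of_nonneg_left h1 (by positivity)
      _ = Cconst α β * 2^(β+2) * (1-x)^(α+2) := by ring
  set Ψc : ℝ := ‖f b1‖^2 - (k/(α+1)) * (1-b1)^(-(α+1)) with hΨc
  have hΨmono : MonotoneOn (fun x => ‖f x‖^2 - (k/(α+1)) * (1-x)^(-(α+1))) (Ico b1 1) := by
    have hb10 : (0:ℝ) ≤ b1 := le_trans hb0 hb1ge
    have hIsub : Ico b1 1 ⊆ Ioo (-1:ℝ) 1 := fun x hx => hsub (hb1sub hx)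
    have hder : ∀ x ∈ Ico b1 1, HasDerivAt
        (fun x => ‖f x‖^2 - (k/(α+1)) * (1-x)^(-(α+1)))
        (2 * (deriv f x * (starRingEnd ℂ) (f x)).re
          - (k/(α+1)) * ((α+1) * (1-x)^(-(α+2)))) x := by
      intro x hx
      have h1x : (0:ℝ) < 1 - x := by linarith [hx.2]
      have h1 := hnderiv x (hIsub hx)
      have h2 : HasDerivAt (fun y : ℝ => (1-y)^(-(α+1))) ((α+1) * (1-x)^(-(α+2))) x := by
        have := (Real.hasDerivAt_rpow_const (x := 1-x) (p := -(α+1))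
          (Or.inl h1x.ne')).comp x ((hasDerivAt_const x (1:ℝ)).sub (hasDerivAt_id x))
        have hexp : -(α+1) - 1 = -(α+2) := by ring
        simp only [hexp, Function.comp_def] at this
        refine this.congr_deriv ?_
        ring
      exact h1.sub (h2.const_mul (k/(α+1)))
    apply monotoneOn_of_deriv_nonneg (convex_Ico b1 1)
    · exact fun x hx => ((hder x hx).differentiableAt).continuousAt.continuousWithinAt
    · rw [interior_Ico]
      exact fun x hx =>
        ((hder x (Ioo_subset_Ico_self hx)).differentiableAt).differentiableWithinAt
    · rw [interior_Ico]
      intro x hx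
      have hx' : x ∈ Ico b1 1 := Ioo_subset_Ico_self hx
      rw [(hder x hx').deriv]
      have h1x : (0:ℝ) < 1 - x := by linarith [hx.2]
      have hx0 : (0:ℝ) ≤ x := le_trans hb10 hx.1.le
      have hxI := hIsub hx'
      have hppos := pfun_pos hα hβ hxI
      have hfge := hb1mem x hx'
      -- (deriv f x * conj (f x)).re = hfun x / p x ≥ 1/p x
      have hre_ge : 1 / pfun α β x ≤ (deriv f x * (starRingEnd ℂ) (f x)).re := by
        rw [div_le_iff₀ hppos]
        have : hfun α β f x = pfun α β x * (deriv f x * (starRingEnd ℂ) (f x)).re := rfl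
        nlinarith [hfge]
      have hrpow_pos : (0:ℝ) < (1-x)^(α+2) := Real.rpow_pos_of_pos h1x _
      have hple := hpupper x ⟨hx0, hx.2⟩
      have h2p : k * (1-x)^(-(α+2)) ≤ 2 / pfun α β x := by
        rw [Real.rpow_neg h1x.le, le_div_iff₀ hppos]
        calc k * ((1-x)^(α+2))⁻¹ * pfun α β x
            ≤ k * ((1-x)^(α+2))⁻¹ * (Cconst α β * 2^(β+2) * (1-x)^(α+2)) := by
              apply mul_le_mul_of_nonneg_left hple (by positivity)
          _ = k * (Cconst α β * 2^(β+2)) := by field_simp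
          _ = 2 := by rw [hk]; field_simp
      have h2p' : 2 / pfun α β x ≤ 2 * (deriv f x * (starRingEnd ℂ) (f x)).re := by
        rw [div_le_iff₀ hppos] at *
        nlinarith [hre_ge, hppos]
      have : (k/(α+1)) * ((α+1) * (1-x)^(-(α+2))) = k * (1-x)^(-(α+2)) := by
        field_simp
      rw [this]
      linarith [h2p, h2p']
  have hflower : ∀ x ∈ Ico b1 1, (k/(α+1)) * (1-x)^(-(α+1)) + Ψc ≤ ‖f x‖^2 := by
    intro x hx
    have := hΨmono (left_mem_Ico.mpr hb1lt) hx hx.1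
    rw [hΨc]
    simp only at this
    linarith
  -- stage 3 : lower bound for wJ and ρ
  set m : ℝ := min 1 (2^β) with hm
  have hmpos : 0 < m := lt_min (by norm_num) (Real.rpow_pos_of_pos (by norm_num) _)
  have hwlow : ∀ x ∈ Ico (0:ℝ) 1, Cconst α β * m * (1-x)^α ≤ wJ α β x := by
    intro x hx
    have h1x : (0:ℝ) < 1 - x := by linarith [hx.2]
    have h1xp : (1:ℝ) ≤ 1 + x := by linarith [hx.1]
    have hbase : m ≤ (1+x)^β := by
      rcases le_or_gt 0 β with hβ0 | hβ0
      · calc m ≤ 1 := min_le_left _ _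
          _ = (1:ℝ)^β := (Real.one_rpow β).symm
          _ ≤ (1+x)^β := Real.rpow_le_rpow (by norm_num) h1xp hβ0
      · calc m ≤ 2^β := min_le_right _ _
          _ ≤ (1+x)^β := by
            have e1 : (2:ℝ)^β = ((2:ℝ)^(-β))⁻¹ := by
              rw [← Real.rpow_neg (by norm_num)]
              norm_num
            have e2 : (1+x)^β = ((1+x)^(-β))⁻¹ := by
              rw [← Real.rpow_neg (by linarith)]
              norm_num
            rw [e1, e2]
            apply inv_anti₀ (Real.rpow_pos_of_pos (by linarith) _)
            exact Real.rpow_le_rpow (by linarith) (by linarith) (by linarith)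
    calc Cconst α β * m * (1-x)^α
        = (Cconst α β * (1-x)^α) * m := by ring
      _ ≤ (Cconst α β * (1-x)^α) * (1+x)^β := by
          apply mul_le_mul_of_nonneg_left hbase
          positivity
      _ = wJ α β x := by rw [show wJ α β x = Cconst α β * (1-x)^α * (1+x)^β from rfl]
  -- stage 3b : lower bound for ρ
  set E : ℝ := Cconst α β * m * Ψc with hE
  set c5 : ℝ := Cconst α β * m * (k/(α+1)) with hc5
  have hc5pos : 0 < c5 := by positivity
  have hb10 : (0:ℝ) ≤ b1 := le_trans hb0 hb1ge
  have hρlow : ∀ x ∈ Ico b1 1, c5 * (1-x)⁻¹ + E * (1-x)^α ≤ ρ x := by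
    intro x hx
    have h1x : (0:ℝ) < 1 - x := by linarith [hx.2]
    have hx0 : (0:ℝ) ≤ x := le_trans hb10 hx.1
    have hxI : x ∈ Ioo (-1:ℝ) 1 := hsub (hb1sub hx)
    have hw := hwlow x ⟨hx0, hx.2⟩
    have hfl := hflower x hx
    have hw0pos : 0 < Cconst α β * m * (1-x)^α := by
      have := Real.rpow_pos_of_pos h1x α
      positivity
    have hfx0 : (0:ℝ) ≤ ‖f x‖^2 := by positivity
    have step : (Cconst α β * m * (1-x)^α) * ((k/(α+1)) * (1-x)^(-(α+1)) + Ψc) ≤ ρ x := by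
      have s1 : (Cconst α β * m * (1-x)^α) * ((k/(α+1)) * (1-x)^(-(α+1)) + Ψc)
          ≤ (Cconst α β * m * (1-x)^α) * ‖f x‖^2 :=
        mul_le_mul_of_nonneg_left hfl hw0pos.le
      have s2 : (Cconst α β * m * (1-x)^α) * ‖f x‖^2 ≤ wJ α β x * ‖f x‖^2 :=
        mul_le_mul_of_nonneg_right hw hfx0
      calc (Cconst α β * m * (1-x)^α) * ((k/(α+1)) * (1-x)^(-(α+1)) + Ψc)
          ≤ (Cconst α β * m * (1-x)^α) * ‖f x‖^2 := s1
        _ ≤ wJ α β x * ‖f x‖^2 := s2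
        _ = ρ x := by rw [hρdef]; ring
    have expand : (Cconst α β * m * (1-x)^α) * ((k/(α+1)) * (1-x)^(-(α+1)) + Ψc)
        = c5 * (1-x)⁻¹ + E * (1-x)^α := by
      have e1 : (1-x)^α * (1-x)^(-(α+1)) = (1-x)⁻¹ := by
        rw [← Real.rpow_add h1x]
        rw [show α + -(α+1) = -1 by ring, Real.rpow_neg_one]
      rw [hc5, hE]
      calc (Cconst α β * m * (1-x)^α) * ((k/(α+1)) * (1-x)^(-(α+1)) + Ψc)
          = Cconst α β * m * (k/(α+1)) * ((1-x)^α * (1-x)^(-(α+1)))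
            + Cconst α β * m * Ψc * (1-x)^α := by ring
        _ = Cconst α β * m * (k/(α+1)) * (1-x)⁻¹ + Cconst α β * m * Ψc * (1-x)^α := by
            rw [e1]
    rw [← expand]
    exact step
  -- stage 4 : eventual absorption of the E-term
  have htend2 : Tendsto (fun x : ℝ => E * (1-x)^(α+1)) (nhdsWithin 1 (Iio 1)) (nhds 0) := by
    have h1 : Tendsto (fun t : ℝ => t ^ (α+1)) (nhds 0) (nhds 0) := by
      have hc := Real.continuousAt_rpow_const 0 (α+1) (Or.inr hα1.le)
      have h0 : (0:ℝ) ^ (α+1) = 0 := Real.zero_rpow (by linarith)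
      simpa [ContinuousAt, h0] using hc
    have h2 : Tendsto (fun x : ℝ => (1-x) ^ (α+1)) (nhdsWithin 1 (Iio 1)) (nhds 0) :=
      h1.comp (htend1.mono_right nhdsWithin_le_nhds)
    have h3 := h2.const_mul E
    simpa using h3
  have hev2 : ∀ᶠ x in nhdsWithin 1 (Iio (1:ℝ)), -(c5/2) ≤ E * (1-x)^(α+1) := by
    have := htend2.eventually (eventually_ge_nhds (show -(c5/2) < 0 by linarith))
    exact this
  obtain ⟨l2, hl2, hsub2⟩ := mem_nhdsLT_iff_exists_Ioo_subset.mp hev2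
  simp only [mem_Iio] at hl2
  set b2 : ℝ := max b1 ((l2+1)/2) with hb2def
  have hb2lt : b2 < 1 := max_lt hb1lt (by linarith)
  have hb2ge : b1 ≤ b2 := le_max_left _ _
  have hb2sub : Ioo b2 1 ⊆ Ico b1 1 := fun x hx => ⟨le_trans hb2ge hx.1.le, hx.2⟩
  have hρlow2 : ∀ x ∈ Ioo b2 1, (c5/2) * (1-x)⁻¹ ≤ ρ x := by
    intro x hx
    have h1x : (0:ℝ) < 1 - x := by linarith [hx.2]
    have hEx : -(c5/2) ≤ E * (1-x)^(α+1) := by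
      apply hsub2
      constructor
      · have := le_trans (le_max_right b1 ((l2+1)/2)) hx.1.le
        linarith
      · exact hx.2
    have h1 := hρlow x (hb2sub hx)
    -- E*(1-x)^α ≥ -(c5/2)*(1-x)⁻¹
    have e1 : E * (1-x)^α = (E * (1-x)^(α+1)) * (1-x)⁻¹ := by
      rw [Real.rpow_add h1x, Real.rpow_one]
      field_simp
    have hinvpos : (0:ℝ) < (1-x)⁻¹ := by positivity
    have h2 : -(c5/2) * (1-x)⁻¹ ≤ E * (1-x)^α := by
      rw [e1]
      exact mul_le_mul_of_nonneg_right hEx hinvpos.le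
    nlinarith [h1, h2]
  -- contradiction with integrability
  have hIsub2 : Ioo b2 1 ⊆ Ioo (-1:ℝ) 1 := fun x hx => ⟨by linarith [hx.1, hb10, hb2ge], hx.2⟩
  have hint : IntegrableOn ρ (Ioo b2 1) volume := hL2.mono_set hIsub2
  have hmint : IntegrableOn (fun x => (c5/2) * (1-x)⁻¹) (Ioo b2 1) volume := by
    apply Integrable.mono' hint
    · apply AEStronglyMeasurable.restrict
      exact (measurable_const.mul ((measurable_const.sub measurable_id).inv)).aestronglyMeasurable
    · rw [ae_restrict_iff' measurableSet_Ioo]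
      apply ae_of_all
      intro x hx
      have h1x : (0:ℝ) < 1 - x := by linarith [hx.2]
      have h2 := hρlow2 x hx
      rw [Real.norm_eq_abs, abs_of_nonneg (by positivity)]
      exact h2
  have hmint2 : IntegrableOn (fun x : ℝ => (x-1)⁻¹) (Ioo b2 1) volume := by
    have h1 : IntegrableOn (fun x : ℝ => (1-x)⁻¹) (Ioo b2 1) volume := by
      have := (hmint.const_mul (2/c5))
      have heq : (fun x : ℝ => (2/c5) * ((c5/2) * (1-x)⁻¹)) = (fun x : ℝ => (1-x)⁻¹) := by
        funext x
        rw [← mul_assoc, div_mul_div_comm]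
        rw [show (2:ℝ) * c5 = c5 * 2 by ring, div_self (by positivity : c5 * 2 ≠ 0), one_mul]
      rwa [heq] at this
    have heq2 : (fun x : ℝ => (x-1)⁻¹) = (fun x : ℝ => -(1-x)⁻¹) := by
      funext x
      rw [← inv_neg, neg_sub]
    rw [heq2]
    exact h1.neg
  have hii : IntervalIntegrable (fun x : ℝ => (x-1)⁻¹) volume b2 1 := by
    rw [intervalIntegrable_iff_integrableOn_Ioc_of_le hb2lt.le]
    rwa [integrableOn_Ioc_iff_integrableOn_Ioo]
  rcases intervalIntegrable_sub_inv_iff.mp hii with h | h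
  · exact absurd h hb2lt.ne
  · exact h (by rw [Set.mem_uIcc]; left; exact ⟨hb2lt.le, le_refl 1⟩)

lemma integrableOn_comp_neg {g : ℝ → ℝ} (hg : IntegrableOn g (Ioo (-1:ℝ) 1) volume) :
    IntegrableOn (fun x => g (-x)) (Ioo (-1:ℝ) 1) volume := by
  have h_map : (volume.restrict (Ioo (-1:ℝ) 1)).map Neg.neg
      = volume.restrict (Ioo (-1:ℝ) 1) := by
    conv => rhs; rw [← Measure.map_neg_eq_self (volume : Measure ℝ),
      measurableEmbedding_neg.restrict_map]
    simp
  rw [IntegrableOn, ← h_map, measurableEmbedding_neg.integrable_map_iff]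
  have : (fun x : ℝ => g (-x)) ∘ Neg.neg = g := by
    funext x; simp
  rwa [this]

lemma wJ_swap (α β : ℝ) (x : ℝ) : wJ β α x = wJ α β (-x) := by
  unfold wJ
  rw [show -β - α - 1 = -α - β - 1 by ring, show β + α + 2 = α + β + 2 by ring,
    show (1:ℝ) - -x = 1 + x by ring, show (1:ℝ) + -x = 1 - x by ring]
  ring

lemma Cconst_swap (α β : ℝ) : Cconst β α = Cconst α β := by
  unfold Cconst
  rw [show -β - α - 1 = -α - β - 1 by ring, show β + α + 2 = α + β + 2 by ring]
  ring

lemma pfun_swap (α β : ℝ) (x : ℝ) : pfun β α x = pfun α β (-x) := by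
  unfold pfun
  rw [Cconst_swap, show (1:ℝ) - -x = 1 + x by ring, show (1:ℝ) + -x = 1 - x by ring]
  ring

lemma endpoint_neg (α β : ℝ) (hα : -1 < α) (hβ : -1 < β) (κ : ℂ) (hκim : (κ^2).im = 0)
    (f : ℝ → ℂ) (hf : ContDiffOn ℝ 2 f (Ioo (-1:ℝ) 1)) (ε : ℝ)
    (heig : ∀ x ∈ Ioo (-1:ℝ) 1, Tdiff α β κ f x = (ε:ℂ) * Complex.I * f x)
    (hL2 : IntegrableOn (fun x => ‖f x‖^2 * wJ α β x) (Ioo (-1:ℝ) 1))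
    (a : ℝ) (ha0 : a ≤ 0) (ha1 : -1 < a) (c : ℝ) (hc : 0 < c)
    (hg : ∀ x ∈ Ioc (-1:ℝ) a, c ≤ |gfun α β f x|) : False := by
  set F : ℝ → ℂ := fun x => f (-x) with hF
  have hmapsTo : MapsTo (fun x : ℝ => -x) (Ioo (-1:ℝ) 1) (Ioo (-1:ℝ) 1) := by
    intro x hx
    simp only [mem_Ioo] at hx ⊢
    constructor <;> [linarith [hx.2]; linarith [hx.1]]
  have hFc : ContDiffOn ℝ 2 F (Ioo (-1:ℝ) 1) :=
    hf.comp (contDiff_neg.contDiffOn) hmapsTo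
  have hd1 : ∀ x : ℝ, deriv F x = -deriv f (-x) := fun x => deriv_comp_neg f x
  have hd2 : ∀ x : ℝ, deriv (deriv F) x = deriv (deriv f) (-x) := by
    intro x
    have h1 : deriv F = fun y => -deriv f (-y) := funext hd1
    rw [h1]
    rw [show (fun y => -deriv f (-y)) = -(fun y => deriv f (-y)) from rfl, deriv.neg]
    rw [deriv_comp_neg (deriv f) x]
    ring
  have hTswap : ∀ x ∈ Ioo (-1:ℝ) 1, Tdiff β α κ F x = Tdiff α β κ f (-x) := by
    intro x hx
    unfold Tdiff
    rw [hd2 x, hd1 x, hF]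
    push_cast
    ring_nf
  have heigF : ∀ x ∈ Ioo (-1:ℝ) 1, Tdiff β α κ F x = (ε:ℂ) * Complex.I * F x := by
    intro x hx
    rw [hTswap x hx]
    exact heig (-x) (hmapsTo hx)
  have hL2F : IntegrableOn (fun x => ‖F x‖^2 * wJ β α x) (Ioo (-1:ℝ) 1) := by
    have h1 := integrableOn_comp_neg hL2
    have h2 : (fun x : ℝ => ‖f (-x)‖^2 * wJ α β (-x)) = fun x => ‖F x‖^2 * wJ β α x := by
      funext x
      rw [hF, (wJ_swap α β x).symm]
    rwa [h2] at h1
  have hgswap : ∀ x : ℝ, gfun β α F x = - gfun α β f (-x) := by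
    intro x
    unfold gfun
    rw [hd1 x, pfun_swap, hF]
    simp only [neg_mul, Complex.neg_im, mul_neg]
  apply endpoint β α hβ hα κ hκim F hFc ε heigF hL2F (-a) (by linarith) (by linarith) c hc
  intro x hx
  rw [hgswap x, abs_neg]
  apply hg
  constructor
  · linarith [hx.2]
  · linarith [hx.1]

set_option maxHeartbeats 1000000 in
/-- there are no square-integrable eigenfunctions of `T` for the
eigenvalues `±i`; hence the deficiency indices are `(0,0)` and `T` is
essentially self-adjoint. -/
theorem stmt_10 (α β : ℝ) (hα : -1 < α) (hαβ : α ≤ β) (κ : ℂ)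
    (hκ : (κ.im = 0 ∧ 0 ≤ κ.re) ∨ κ.re = 0)
    (f : ℝ → ℂ) (hf : ContDiffOn ℝ 2 f (Set.Ioo (-1 : ℝ) 1))
    (heig : (∀ x ∈ Set.Ioo (-1 : ℝ) 1, Tdiff α β κ f x = Complex.I * f x) ∨
            (∀ x ∈ Set.Ioo (-1 : ℝ) 1, Tdiff α β κ f x = -Complex.I * f x))
    (hL2 : MeasureTheory.IntegrableOn (fun x => ‖f x‖ ^ 2 * wJ α β x) (Set.Ioo (-1 : ℝ) 1)) :
    ∀ x ∈ Set.Ioo (-1 : ℝ) 1, f x = 0 := by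
  have hβ : -1 < β := lt_of_lt_of_le hα hαβ
  have hκim : (κ^2).im = 0 := by
    rw [pow_two, Complex.mul_im]
    rcases hκ with ⟨h1, _⟩ | h1 <;> rw [h1] <;> ring
  obtain ⟨ε, hεval, heig'⟩ : ∃ ε : ℝ, (ε = 1 ∨ ε = -1) ∧
      ∀ x ∈ Set.Ioo (-1:ℝ) 1, Tdiff α β κ f x = (ε:ℂ) * Complex.I * f x := by
    rcases heig with h | h
    · exact ⟨1, Or.inl rfl, fun x hx => by rw [h x hx]; norm_num⟩
    · exact ⟨-1, Or.inr rfl, fun x hx => by rw [h x hx]; push_cast; ring⟩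
  by_contra hcon
  push_neg at hcon
  obtain ⟨x₀, hx₀, hfx₀⟩ := hcon
  set ρ : ℝ → ℝ := fun x => ‖f x‖^2 * wJ α β x with hρdef
  have hρcont := rho_continuousOn (α := α) (β := β) hf
  have hρ0 : ∀ x ∈ Ioo (-1:ℝ) 1, 0 ≤ ρ x :=
    fun x hx => mul_nonneg (by positivity) (wJ_pos hα hβ hx).le
  -- FTC for gfun
  have hFTC : ∀ a b : ℝ, a ∈ Ioo (-1:ℝ) 1 → b ∈ Ioo (-1:ℝ) 1 → a ≤ b →
      gfun α β f b - gfun α β f a = ε * ∫ x in a..b, ρ x := by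
    intro a b ha hb hab
    have h1 : ∀ x ∈ uIcc a b, HasDerivAt (gfun α β f) (ε * ρ x) x := by
      intro x hx
      rw [uIcc_of_le hab] at hx
      exact (key_deriv α β κ hκim f hf ε heig'
        ⟨lt_of_lt_of_le ha.1 hx.1, lt_of_le_of_lt hx.2 hb.2⟩).1
    have h2 : IntervalIntegrable (fun x => ε * ρ x) volume a b := by
      apply IntervalIntegrable.const_mul
      rw [intervalIntegrable_iff_integrableOn_Ioc_of_le hab]
      exact hL2.mono_set (fun t ht => ⟨lt_trans ha.1 ht.1, lt_of_le_of_lt ht.2 hb.2⟩)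
    have h3 := intervalIntegral.integral_eq_sub_of_hasDerivAt h1 h2
    rw [intervalIntegral.integral_const_mul] at h3
    rw [← h3]
  have hIntNN : ∀ a b : ℝ, a ∈ Ioo (-1:ℝ) 1 → b ∈ Ioo (-1:ℝ) 1 → a ≤ b →
      0 ≤ ∫ x in a..b, ρ x := by
    intro a b ha hb hab
    apply intervalIntegral.integral_nonneg hab
    intro u hu
    exact hρ0 u ⟨lt_of_lt_of_le ha.1 hu.1, lt_of_le_of_lt hu.2 hb.2⟩
  -- a subinterval with positive integral
  have hρx₀ : 0 < ρ x₀ := by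
    have h1 : (0:ℝ) < ‖f x₀‖ := norm_pos_iff.mpr hfx₀
    exact mul_pos (by positivity) (wJ_pos hα hβ hx₀)
  have hev : ∀ᶠ y in nhds x₀, ρ x₀/2 < ρ y ∧ y ∈ Ioo (-1:ℝ) 1 := by
    apply Filter.Eventually.and
    · exact (hρcont.continuousAt (isOpen_Ioo.mem_nhds hx₀)).eventually
        (eventually_gt_nhds (half_lt_self hρx₀))
    · exact isOpen_Ioo.eventually_mem hx₀
  obtain ⟨δ, hδpos, hδ⟩ := Metric.eventually_nhds_iff.mp hev
  set a₀ : ℝ := x₀ - δ/2 with ha₀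
  set b₀ : ℝ := x₀ + δ/2 with hb₀
  have hIcc : ∀ y ∈ Icc a₀ b₀, ρ x₀/2 < ρ y ∧ y ∈ Ioo (-1:ℝ) 1 := by
    intro y hy
    simp only [ha₀, hb₀, mem_Icc] at hy
    apply hδ
    rw [Real.dist_eq, abs_lt]
    constructor <;> linarith [hy.1, hy.2]
  have ha₀I : a₀ ∈ Ioo (-1:ℝ) 1 :=
    (hIcc a₀ ⟨le_refl _, by rw [ha₀, hb₀]; linarith⟩).2
  have hb₀I : b₀ ∈ Ioo (-1:ℝ) 1 :=
    (hIcc b₀ ⟨by rw [ha₀, hb₀]; linarith, le_refl _⟩).2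
  have hab : a₀ ≤ b₀ := by rw [ha₀, hb₀]; linarith
  set J : ℝ := ∫ x in a₀..b₀, ρ x with hJ
  have hJpos : 0 < J := by
    have hii : IntervalIntegrable ρ volume a₀ b₀ := by
      rw [intervalIntegrable_iff_integrableOn_Ioc_of_le hab]
      exact hL2.mono_set (fun t ht => ⟨lt_trans ha₀I.1 ht.1, lt_of_le_of_lt ht.2 hb₀I.2⟩)
    have hlow : ∫ x in a₀..b₀, (ρ x₀/2 : ℝ) ≤ ∫ x in a₀..b₀, ρ x := by
      apply intervalIntegral.integral_mono_on hab intervalIntegrable_const hii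
      exact fun u hu => (hIcc u hu).1.le
    rw [intervalIntegral.integral_const] at hlow
    have : (0:ℝ) < (b₀ - a₀) • (ρ x₀/2) := by
      rw [smul_eq_mul]
      apply mul_pos _ (by linarith)
      rw [ha₀, hb₀]; linarith
    linarith
  -- the tails
  set g : ℝ → ℝ := gfun α β f with hgdef
  have hgb₀a₀ : g b₀ - g a₀ = ε * J := hFTC a₀ b₀ ha₀I hb₀I hab
  have tail_pos : ∀ c : ℝ, 0 < c → (∀ x ∈ Ico (max b₀ 0) 1, c ≤ |g x|) → False := by
    intro c hc h
    exact endpoint α β hα hβ κ hκim f hf ε heig' hL2 (max b₀ 0) (le_max_right _ _)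
      (max_lt hb₀I.2 one_pos) c hc h
  have tail_neg : ∀ c : ℝ, 0 < c → (∀ x ∈ Ioc (-1:ℝ) (min a₀ 0), c ≤ |g x|) → False := by
    intro c hc h
    exact endpoint_neg α β hα hβ κ hκim f hf ε heig' hL2 (min a₀ 0) (min_le_right _ _)
      (lt_min ha₀I.1 (by norm_num)) c hc h
  -- location helpers
  have hmaxI : ∀ x ∈ Ico (max b₀ 0) 1, x ∈ Ioo (-1:ℝ) 1 ∧ b₀ ≤ x := by
    intro x hx
    have h1 : b₀ ≤ x := le_trans (le_max_left _ _) hx.1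
    exact ⟨⟨lt_of_lt_of_le ha₀I.1 (le_trans hab h1), hx.2⟩, h1⟩
  have hminI : ∀ x ∈ Ioc (-1:ℝ) (min a₀ 0), x ∈ Ioo (-1:ℝ) 1 ∧ x ≤ a₀ := by
    intro x hx
    have h1 : x ≤ a₀ := le_trans hx.2 (min_le_left _ _)
    exact ⟨⟨hx.1, lt_of_le_of_lt (le_trans h1 hab) hb₀I.2⟩, h1⟩
  rcases hεval with hε | hε
  · -- ε = 1 : g is nondecreasing, g b₀ - g a₀ = J > 0
    rcases lt_or_ge 0 (g b₀) with hgb | hgb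
    · apply tail_pos (g b₀) hgb
      intro x hx
      obtain ⟨hxI, hbx⟩ := hmaxI x hx
      have h1 := hFTC b₀ x hb₀I hxI hbx
      have h2 := hIntNN b₀ x hb₀I hxI hbx
      rw [hε] at h1
      calc g b₀ ≤ g x := by linarith
        _ ≤ |g x| := le_abs_self _
    · apply tail_neg J hJpos
      intro x hx
      obtain ⟨hxI, hxa⟩ := hminI x hx
      have h1 := hFTC x a₀ hxI ha₀I hxa
      have h2 := hIntNN x a₀ hxI ha₀I hxa
      rw [hε] at h1 hgb₀a₀
      have h3 : g x ≤ -J := by linarith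
      calc J ≤ -(g x) := by linarith
        _ ≤ |g x| := neg_le_abs _
  · -- ε = -1 : g is nonincreasing, g b₀ - g a₀ = -J < 0
    rcases lt_or_ge (g b₀) 0 with hgb | hgb
    · apply tail_pos (-(g b₀)) (by linarith)
      intro x hx
      obtain ⟨hxI, hbx⟩ := hmaxI x hx
      have h1 := hFTC b₀ x hb₀I hxI hbx
      have h2 := hIntNN b₀ x hb₀I hxI hbx
      rw [hε] at h1
      have h3 : g x ≤ g b₀ := by nlinarith
      calc -(g b₀) ≤ -(g x) := by linarith
        _ ≤ |g x| := neg_le_abs _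
    · apply tail_neg J hJpos
      intro x hx
      obtain ⟨hxI, hxa⟩ := hminI x hx
      have h1 := hFTC x a₀ hxI ha₀I hxa
      have h2 := hIntNN x a₀ hxI ha₀I hxa
      rw [hε] at h1 hgb₀a₀
      have h3 : J ≤ g x := by nlinarith
      calc J ≤ g x := h3
        _ ≤ |g x| := le_abs_self _
end
end

section
/- Let −1 < α ≤ β, let κ ∈ ℝ, and let n ∈ ℕ be such that s := κ − 2n − 1 > 0 and s² ≥ (β−α)(α+β+2). Define λ_n = ( s/2 + (α−β)(α+β+2)/(2s) )² − (α+1)². Then λ_n + (α+1)² ≥ 0 and λ_n + (β+1)² ≥ 0, the identity √(λ_n + (α+1)²) + √(λ_n + (β+1)²) = κ − 2n − 1 holds, and moreover λ_n = ( s/2 − (α−β)(α+β+2)/(2s) )² − (β+1)². -/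
noncomputable section
open MeasureTheory Asymptotics Filter

/-- the explicit formula for the discrete spectral point `λ_n`,
the real solution of `√(λ+(α+1)²) + √(λ+(β+1)²) = κ − 2n − 1`. -/
theorem stmt_11 (α β κ : ℝ) (hα : -1 < α) (hαβ : α ≤ β) (n : ℕ) (s : ℝ)
    (hs : s = κ - 2 * n - 1) (hspos : 0 < s) (hs2 : (β - α) * (α + β + 2) ≤ s ^ 2)
    (lamn : ℝ)
    (hlam : lamn = (s / 2 + (α - β) * (α + β + 2) / (2 * s)) ^ 2 - (α + 1) ^ 2) :
    0 ≤ lamn + (α + 1) ^ 2 ∧ 0 ≤ lamn + (β + 1) ^ 2 ∧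
    Real.sqrt (lamn + (α + 1) ^ 2) + Real.sqrt (lamn + (β + 1) ^ 2) = κ - 2 * n - 1 ∧
    lamn = (s / 2 - (α - β) * (α + β + 2) / (2 * s)) ^ 2 - (β + 1) ^ 2 := by
  have hsne : s ≠ 0 := ne_of_gt hspos
  set t : ℝ := (α - β) * (α + β + 2) / (2 * s) with ht
  have hd : (α - β) * (α + β + 2) ≤ 0 :=
    mul_nonpos_of_nonpos_of_nonneg (by linarith) (by linarith)
  have ha : 0 ≤ s / 2 + t := by
    have : s / 2 + t = (s ^ 2 + (α - β) * (α + β + 2)) / (2 * s) := by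
      rw [ht, eq_div_iff (by positivity), add_mul, div_mul_cancel₀ ((α - β) * (α + β + 2)) (show (2 * s) ≠ 0 by positivity)]; ring
    rw [this]
    apply div_nonneg (by nlinarith) (by linarith)
  have hb : 0 ≤ s / 2 - t := by
    have : t ≤ 0 := div_nonpos_of_nonpos_of_nonneg hd (by linarith)
    linarith
  have key : lamn + (β + 1) ^ 2 = (s / 2 - t) ^ 2 := by
    rw [hlam, ht]
    field_simp
    ring
  have keyA : lamn + (α + 1) ^ 2 = (s / 2 + t) ^ 2 := by rw [hlam]; ring
  refine ⟨by rw [keyA]; positivity, by rw [key]; positivity, ?_, by linarith [key]⟩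
  rw [keyA, key, Real.sqrt_sq ha, Real.sqrt_sq hb, ← hs]
  ring
end
end

section
/- Let −1 < α ≤ β and let κ ≥ 0 be real. For λ < −(β+1)² set δ_λ = i√(−λ−(α+1)²) and η_λ = i√(−λ−(β+1)²). Then as λ → −∞: (i) c(δ_λ; η_λ) = O(e^{−π√(−λ)}), and (ii) c(−δ_λ; η_λ) = O(1). -/
noncomputable section
open MeasureTheory Asymptotics Filter

/-- `δ_λ = i√(−λ−(α+1)²)`. -/
def deltaC (α : ℝ) (lam : ℝ) : ℂ :=
  Complex.I * ((Real.sqrt (-lam - (α + 1) ^ 2) : ℝ) : ℂ)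

/-- `η_λ = i√(−λ−(β+1)²)`. -/
def etaC (β : ℝ) (lam : ℝ) : ℂ :=
  Complex.I * ((Real.sqrt (-lam - (β + 1) ^ 2) : ℝ) : ℂ)


section auxlemmas
open Real

lemma cabs_ofReal' (r : ℝ) : ‖(r : ℂ)‖ = |r| := by
  rw [Complex.norm_real, Real.norm_eq_abs]

-- |sin z| ≤ exp |Im z|
lemma abs_sin_le (z : ℂ) : norm (Complex.sin z) ≤ Real.exp |z.im| := by
  have h := Complex.sin_eq z
  calc norm (Complex.sin z)
      ≤ norm (Complex.sin z.re * Complex.cosh z.im)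
        + norm (Complex.cos z.re * Complex.sinh z.im * Complex.I) := by
        rw [h]; exact norm_add_le _ _
    _ = |Real.sin z.re| * |Real.cosh z.im| + |Real.cos z.re| * |Real.sinh z.im| := by
        rw [norm_mul, norm_mul, norm_mul, Complex.norm_I, mul_one,
          ← Complex.ofReal_sin, ← Complex.ofReal_cos, ← Complex.ofReal_sinh,
          ← Complex.ofReal_cosh, cabs_ofReal', cabs_ofReal',
          cabs_ofReal', cabs_ofReal']
    _ ≤ Real.exp |z.im| := by
        have h1 : |Real.sin z.re| ≤ 1 := Real.abs_sin_le_one _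
        have h2 : |Real.cos z.re| ≤ 1 := Real.abs_cos_le_one _
        have h3 : |Real.cosh z.im| = Real.cosh z.im := abs_of_pos (Real.cosh_pos _)
        have hs := Real.sinh_eq z.im
        have hc := Real.cosh_eq z.im
        have e1 : Real.exp z.im ≤ Real.exp |z.im| := Real.exp_le_exp.mpr (le_abs_self _)
        have e2 : Real.exp (-z.im) ≤ Real.exp |z.im| := Real.exp_le_exp.mpr (neg_le_abs _)
        have hcp := Real.cosh_pos z.im
        rcases abs_cases (Real.sinh z.im) with ⟨he, hge⟩ | ⟨he, hlt⟩ <;> rw [h3, he]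
        · nlinarith [mul_le_of_le_one_left hcp.le h1, mul_le_of_le_one_left hge h2]
        · nlinarith [mul_le_of_le_one_left hcp.le h1,
            mul_le_of_le_one_left (neg_nonneg.mpr hlt.le) h2]

-- reflection pair: |Γ(p+νi) Γ((1-p)+νi)| = π / |sin(π(p+νi))|
lemma abs_gamma_pair (p ν : ℝ) :
    norm (Complex.Gamma ((p : ℂ) + (ν : ℂ) * Complex.I)
      * Complex.Gamma (((1 - p : ℝ) : ℂ) + (ν : ℂ) * Complex.I))
    = Real.pi / norm (Complex.sin ((Real.pi : ℂ) * ((p : ℂ) + (ν : ℂ) * Complex.I))) := by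
  have hconj : (((1 - p : ℝ) : ℂ) + (ν : ℂ) * Complex.I)
      = (starRingEnd ℂ) (1 - ((p : ℂ) + (ν : ℂ) * Complex.I)) := by
    simp only [map_sub, map_one, map_add, map_mul, Complex.conj_ofReal, Complex.conj_I]
    push_cast; ring
  rw [norm_mul, hconj, Complex.Gamma_conj, Complex.norm_conj, ← norm_mul,
    Complex.Gamma_mul_Gamma_one_sub, norm_div, cabs_ofReal',
    abs_of_pos Real.pi_pos]

-- |Γ(1+ti)|² = πt / sinh(πt)
lemma abs_gamma_one_add (t : ℝ) (ht : 0 < t) :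
    (norm (Complex.Gamma (1 + (t : ℂ) * Complex.I))) ^ 2
      = Real.pi * t / Real.sinh (Real.pi * t) := by
  have hz : ((t : ℂ) * Complex.I) ≠ 0 :=
    mul_ne_zero (Complex.ofReal_ne_zero.mpr ht.ne') Complex.I_ne_zero
  have h1 : Complex.Gamma (1 + (t : ℂ) * Complex.I)
      = (t : ℂ) * Complex.I * Complex.Gamma ((t : ℂ) * Complex.I) := by
    rw [add_comm]; exact Complex.Gamma_add_one _ hz
  have h2 := Complex.Gamma_mul_Gamma_one_sub ((t : ℂ) * Complex.I)
  have h3 : Complex.sin ((Real.pi : ℂ) * ((t : ℂ) * Complex.I))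
      = (Real.sinh (Real.pi * t) : ℂ) * Complex.I := by
    rw [show ((Real.pi : ℂ) * ((t : ℂ) * Complex.I)) = ((Real.pi * t : ℝ) : ℂ) * Complex.I by
      push_cast; ring, Complex.sin_mul_I, Complex.ofReal_sinh]
  have h4 : Complex.Gamma (1 - (t : ℂ) * Complex.I)
      = (starRingEnd ℂ) (Complex.Gamma (1 + (t : ℂ) * Complex.I)) := by
    rw [← Complex.Gamma_conj]
    congr 1
    simp only [map_add, map_one, map_mul, Complex.conj_ofReal, Complex.conj_I]
    ring
  have hsh : Real.sinh (Real.pi * t) ≠ 0 := by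
    have : (0:ℝ) < Real.pi * t := by positivity
    exact (Real.sinh_pos_iff.mpr this).ne'
  have key : Complex.Gamma (1 + (t : ℂ) * Complex.I)
      * (starRingEnd ℂ) (Complex.Gamma (1 + (t : ℂ) * Complex.I))
      = ((Real.pi * t / Real.sinh (Real.pi * t) : ℝ) : ℂ) := by
    rw [← h4, h1, mul_assoc, h2, h3]
    have hs' : ((Real.sinh (Real.pi * t) : ℝ) : ℂ) ≠ 0 := Complex.ofReal_ne_zero.mpr hsh
    push_cast
    rw [div_eq_mul_inv, mul_inv, Complex.inv_I]
    field_simp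
    ring_nf
    simp [Complex.I_sq]
  rw [Complex.mul_conj] at key
  rw [Complex.sq_norm]
  exact_mod_cast key

-- |Γ(σi)| = |Γ(1+|σ|i)| / |σ|
lemma abs_gamma_I (σ : ℝ) (hσ : σ ≠ 0) :
    norm (Complex.Gamma ((σ : ℂ) * Complex.I))
      = norm (Complex.Gamma (1 + ((|σ| : ℝ) : ℂ) * Complex.I)) / |σ| := by
  have habs : norm (Complex.Gamma ((σ : ℂ) * Complex.I))
      = norm (Complex.Gamma (((|σ| : ℝ) : ℂ) * Complex.I)) := by
    rcases abs_cases σ with ⟨he, _⟩ | ⟨he, _⟩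
    · rw [he]
    · rw [he]
      have : ((-σ : ℝ) : ℂ) * Complex.I = (starRingEnd ℂ) ((σ : ℂ) * Complex.I) := by
        simp only [map_mul, Complex.conj_ofReal, Complex.conj_I]; push_cast; ring
      rw [this, Complex.Gamma_conj, Complex.norm_conj]
  have hz : ((|σ| : ℝ) : ℂ) * Complex.I ≠ 0 :=
    mul_ne_zero (Complex.ofReal_ne_zero.mpr (abs_ne_zero.mpr hσ)) Complex.I_ne_zero
  have h1 : Complex.Gamma (1 + ((|σ| : ℝ) : ℂ) * Complex.I)
      = ((|σ| : ℝ) : ℂ) * Complex.I * Complex.Gamma (((|σ| : ℝ) : ℂ) * Complex.I) := by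
    rw [add_comm]; exact Complex.Gamma_add_one _ hz
  rw [habs, h1, norm_mul, norm_mul, cabs_ofReal', Complex.norm_I, mul_one, _root_.abs_abs σ]
  field_simp [abs_ne_zero.mpr hσ]

-- sinh lower bound
lemma sinh_ge (x : ℝ) (hx : 1 ≤ x) : Real.exp x / 4 ≤ Real.sinh x := by
  rw [Real.sinh_eq]
  have h1 : Real.exp (-x) ≤ Real.exp (-1) := Real.exp_le_exp.mpr (by linarith)
  have h20 : (2:ℝ) ≤ Real.exp 1 := by nlinarith [Real.add_one_le_exp 1]
  have hx1 := Real.exp_pos 1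
  have hinv : (Real.exp 1)⁻¹ * Real.exp 1 = 1 := inv_mul_cancel₀ hx1.ne'
  have h2 : Real.exp (-1:ℝ) ≤ 1/2 := by
    rw [Real.exp_neg]; nlinarith [inv_nonneg.mpr hx1.le]
  have h3 : (1:ℝ) ≤ Real.exp x := by
    rw [show (1:ℝ) = Real.exp 0 by simp]; exact Real.exp_le_exp.mpr (by linarith)
  nlinarith

lemma key_bound (κ t σ : ℝ) (ht : 1 ≤ t) (hσ1 : 1 ≤ |σ|) (hts : t ≤ |σ|) :
    norm (cfun (κ : ℂ) (Complex.I * (σ : ℂ)) (Complex.I * (t : ℂ)))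
      ≤ 4 * Real.exp (Real.pi * |t - σ| / 2) * Real.exp (-(Real.pi * (t + |σ|) / 2)) := by
  have ht0 : (0:ℝ) < t := by linarith
  have hσ0 : σ ≠ 0 := by
    intro h; rw [h, abs_zero] at hσ1; linarith
  have hσa : (0:ℝ) < |σ| := by linarith
  have hπ3 := Real.pi_gt_three
  unfold cfun
  rw [norm_div, norm_mul]
  -- rewrite the denominator
  have e3 : (1 + Complex.I * (t:ℂ) - Complex.I * (σ:ℂ) + (κ:ℂ)) / 2
      = (((1+κ)/2 : ℝ) : ℂ) + (((t-σ)/2 : ℝ) : ℂ) * Complex.I := by push_cast; ring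
  have e4 : (1 + Complex.I * (t:ℂ) - Complex.I * (σ:ℂ) - (κ:ℂ)) / 2
      = (((1 - (1+κ)/2 : ℝ)) : ℂ) + (((t-σ)/2 : ℝ) : ℂ) * Complex.I := by push_cast; ring
  rw [e3, e4, abs_gamma_pair ((1+κ)/2) ((t-σ)/2)]
  -- rewrite the numerator factors
  have e1 : (1 + Complex.I * (t:ℂ)) = 1 + (t:ℂ) * Complex.I := by ring
  have e2 : (-(Complex.I * (σ:ℂ))) = ((-σ : ℝ) : ℂ) * Complex.I := by push_cast; ring
  rw [e1, e2, abs_gamma_I (-σ) (neg_ne_zero.mpr hσ0), abs_neg σ]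
  set A := norm (Complex.Gamma (1 + (t:ℂ) * Complex.I)) with hA
  set B := norm (Complex.Gamma (1 + ((|σ| : ℝ):ℂ) * Complex.I)) with hB
  set S := norm (Complex.sin ((Real.pi : ℂ)
      * ((((1+κ)/2 : ℝ) : ℂ) + (((t-σ)/2 : ℝ) : ℂ) * Complex.I))) with hS
  have hAnn : 0 ≤ A := norm_nonneg _
  have hBnn : 0 ≤ B := norm_nonneg _
  have hSnn : 0 ≤ S := norm_nonneg _
  -- bound on S
  have hSle : S ≤ Real.exp (Real.pi * |t - σ| / 2) := by
    have him : ((Real.pi : ℂ) * ((((1+κ)/2 : ℝ) : ℂ) + (((t-σ)/2 : ℝ) : ℂ) * Complex.I)).im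
        = Real.pi * ((t-σ)/2) := by
      simp [Complex.mul_im, Complex.add_im, Complex.add_re, Complex.ofReal_re,
        Complex.ofReal_im, Complex.mul_re, Complex.mul_im, Complex.I_re, Complex.I_im]
    calc S ≤ Real.exp |((Real.pi : ℂ) * ((((1+κ)/2 : ℝ) : ℂ)
          + (((t-σ)/2 : ℝ) : ℂ) * Complex.I)).im| := abs_sin_le _
      _ = Real.exp (Real.pi * |t - σ| / 2) := by
          rw [him]
          congr 1
          rw [abs_mul, abs_of_pos Real.pi_pos, abs_div]
          norm_num
          ring
  -- bound on A * (B / |σ|)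
  have hsinh_t := sinh_ge (Real.pi * t) (by nlinarith)
  have hsinh_s := sinh_ge (Real.pi * |σ|) (by nlinarith)
  have hsp_t : (0:ℝ) < Real.sinh (Real.pi * t) := Real.sinh_pos_iff.mpr (by positivity)
  have hsp_s : (0:ℝ) < Real.sinh (Real.pi * |σ|) := Real.sinh_pos_iff.mpr (by positivity)
  have hexp_t := Real.exp_pos (Real.pi * t)
  have hexp_s := Real.exp_pos (Real.pi * |σ|)
  have hNsq : (A * (B / |σ|))^2
      = Real.pi^2 * (t / |σ|) / (Real.sinh (Real.pi * t) * Real.sinh (Real.pi * |σ|)) := by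
    have h1 := abs_gamma_one_add t ht0
    have h2 := abs_gamma_one_add |σ| hσa
    rw [mul_pow, div_pow, ← hA, ← hB] at *
    rw [h1, h2]
    field_simp
  have hM : A * (B / |σ|) ≤ 4 * Real.pi * Real.exp (-(Real.pi * (t + |σ|) / 2)) := by
    have hNle : (A * (B / |σ|))^2
        ≤ (4 * Real.pi * Real.exp (-(Real.pi * (t + |σ|) / 2)))^2 := by
      rw [hNsq]
      have hrhs : (4 * Real.pi * Real.exp (-(Real.pi * (t + |σ|) / 2)))^2
          = Real.pi^2 * 1 / (Real.exp (Real.pi * t) / 4 * (Real.exp (Real.pi * |σ|) / 4)) := by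
        have hh : Real.exp (-(Real.pi * (t + |σ|) / 2)) ^ 2
            * (Real.exp (Real.pi * t) * Real.exp (Real.pi * |σ|)) = 1 := by
          rw [sq, ← Real.exp_add, ← Real.exp_add, ← Real.exp_add, Real.exp_eq_one_iff]
          ring
        rw [eq_div_iff (by positivity)]
        linear_combination Real.pi^2 * hh
      rw [hrhs]
      apply div_le_div₀ (by positivity)
      · have : t / |σ| ≤ 1 := (div_le_one hσa).mpr hts
        nlinarith [sq_nonneg Real.pi]
      · positivity
      · exact mul_le_mul hsinh_t hsinh_s (by positivity) hsp_t.le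
    calc A * (B / |σ|) = Real.sqrt ((A * (B / |σ|))^2) :=
          (Real.sqrt_sq (by positivity)).symm
      _ ≤ Real.sqrt ((4 * Real.pi * Real.exp (-(Real.pi * (t + |σ|) / 2)))^2) :=
          Real.sqrt_le_sqrt hNle
      _ = 4 * Real.pi * Real.exp (-(Real.pi * (t + |σ|) / 2)) :=
          Real.sqrt_sq (by positivity)
  -- put it together
  calc A * (B / |σ|) / (Real.pi / S)
      = A * (B / |σ|) * S / Real.pi := div_div_eq_mul_div _ _ _
    _ ≤ 4 * Real.pi * Real.exp (-(Real.pi * (t + |σ|) / 2))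
          * Real.exp (Real.pi * |t - σ| / 2) / Real.pi := by
        gcongr
    _ = 4 * Real.exp (Real.pi * |t - σ| / 2) * Real.exp (-(Real.pi * (t + |σ|) / 2)) := by
        field_simp

end auxlemmas

/-- asymptotic behavior of the `c`-functions as `λ → −∞`:
`c(δ_λ;η_λ) = O(e^{−π√(−λ)})` and `c(−δ_λ;η_λ) = O(1)`. -/
theorem stmt_18 (α β κ : ℝ) (hα : -1 < α) (hαβ : α ≤ β) (hκ : 0 ≤ κ) :
    (fun lam : ℝ => cfun (κ : ℂ) (deltaC α lam) (etaC β lam))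
      =O[atBot] (fun lam : ℝ => Real.exp (-Real.pi * Real.sqrt (-lam))) ∧
    (fun lam : ℝ => cfun (κ : ℂ) (-(deltaC α lam)) (etaC β lam))
      =O[atBot] (fun _ : ℝ => (1 : ℝ)) := by
  have hβ : -1 < β := lt_of_lt_of_le hα hαβ
  have hab : (α + 1) ^ 2 ≤ (β + 1) ^ 2 := by nlinarith
  have hβ1 : (0:ℝ) ≤ β + 1 := by linarith
  constructor
  · rw [Asymptotics.isBigO_iff]
    refine ⟨4 * Real.exp (Real.pi * (β + 1)), ?_⟩
    filter_upwards [eventually_le_atBot (-((β + 1) ^ 2 + 1))] with lam hlam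
    set t := Real.sqrt (-lam - (β + 1) ^ 2) with htdef
    set s := Real.sqrt (-lam - (α + 1) ^ 2) with hsdef
    have hb1 : (1:ℝ) ≤ -lam - (β + 1) ^ 2 := by linarith
    have ha1 : (1:ℝ) ≤ -lam - (α + 1) ^ 2 := by linarith
    have ht : 1 ≤ t := by
      nlinarith [Real.sq_sqrt (show (0:ℝ) ≤ -lam - (β + 1) ^ 2 by linarith),
        Real.sqrt_nonneg (-lam - (β + 1) ^ 2)]
    have hts : t ≤ s := Real.sqrt_le_sqrt (by linarith)
    have hs : 1 ≤ s := le_trans ht hts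
    have hs0 : (0:ℝ) ≤ s := by linarith
    have hkey := key_bound κ t s ht (by rwa [abs_of_nonneg hs0])
      (by rwa [abs_of_nonneg hs0])
    rw [abs_of_nonneg hs0] at hkey
    have habs : |t - s| = s - t := by rw [abs_of_nonpos (by linarith)]; ring
    rw [habs] at hkey
    rw [Real.norm_eq_abs, abs_of_pos (Real.exp_pos _)]
    have heq : cfun (κ : ℂ) (deltaC α lam) (etaC β lam)
        = cfun (κ : ℂ) (Complex.I * (s : ℂ)) (Complex.I * (t : ℂ)) := rfl
    rw [heq]
    have htsq : t ^ 2 = -lam - (β + 1) ^ 2 := Real.sq_sqrt (by linarith)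
    have hsqrt : Real.sqrt (-lam) ≤ t + (β + 1) := by
      have h2 : -lam ≤ (t + (β + 1)) ^ 2 := by nlinarith
      calc Real.sqrt (-lam) ≤ Real.sqrt ((t + (β + 1)) ^ 2) := Real.sqrt_le_sqrt h2
        _ = t + (β + 1) := Real.sqrt_sq (by linarith)
    calc norm (cfun (κ : ℂ) (Complex.I * (s : ℂ)) (Complex.I * (t : ℂ)))
        ≤ 4 * Real.exp (Real.pi * (s - t) / 2)
            * Real.exp (-(Real.pi * (t + s) / 2)) := hkey
      _ = 4 * Real.exp (-(Real.pi * t)) := by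
          rw [mul_assoc, ← Real.exp_add]; congr 1; ring
      _ ≤ 4 * Real.exp (Real.pi * (β + 1))
            * Real.exp (-Real.pi * Real.sqrt (-lam)) := by
          rw [mul_assoc, ← Real.exp_add]
          have harg : -(Real.pi * t)
              ≤ Real.pi * (β + 1) + -Real.pi * Real.sqrt (-lam) := by
            nlinarith [Real.pi_pos]
          have := Real.exp_le_exp.mpr harg
          nlinarith [Real.exp_pos (-(Real.pi * t))]
  · rw [Asymptotics.isBigO_iff]
    refine ⟨4, ?_⟩
    filter_upwards [eventually_le_atBot (-((β + 1) ^ 2 + 1))] with lam hlam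
    set t := Real.sqrt (-lam - (β + 1) ^ 2) with htdef
    set s := Real.sqrt (-lam - (α + 1) ^ 2) with hsdef
    have hb1 : (1:ℝ) ≤ -lam - (β + 1) ^ 2 := by linarith
    have ha1 : (1:ℝ) ≤ -lam - (α + 1) ^ 2 := by linarith
    have ht : 1 ≤ t := by
      nlinarith [Real.sq_sqrt (show (0:ℝ) ≤ -lam - (β + 1) ^ 2 by linarith),
        Real.sqrt_nonneg (-lam - (β + 1) ^ 2)]
    have hts : t ≤ s := Real.sqrt_le_sqrt (by linarith)
    have hs : 1 ≤ s := le_trans ht hts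
    have hs0 : (0:ℝ) ≤ s := by linarith
    have hkey := key_bound κ t (-s) ht (by rwa [abs_neg, abs_of_nonneg hs0])
      (by rwa [abs_neg, abs_of_nonneg hs0])
    rw [abs_neg, abs_of_nonneg hs0] at hkey
    have habs : |t - -s| = t + s := by rw [abs_of_nonneg (by linarith)]; ring
    rw [habs] at hkey
    rw [norm_one, mul_one]
    have heq : cfun (κ : ℂ) (-(deltaC α lam)) (etaC β lam)
        = cfun (κ : ℂ) (Complex.I * ((-s : ℝ) : ℂ)) (Complex.I * (t : ℂ)) := by
      have h0 : -(deltaC α lam) = Complex.I * ((-s : ℝ) : ℂ) := by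
        unfold deltaC; push_cast; ring
      rw [h0]
      rfl
    rw [heq]

    calc norm (cfun (κ : ℂ) (Complex.I * ((-s : ℝ) : ℂ)) (Complex.I * (t : ℂ)))
        ≤ 4 * Real.exp (Real.pi * (t + s) / 2)
            * Real.exp (-(Real.pi * (t + s) / 2)) := hkey
      _ = 4 := by
          rw [mul_assoc, ← Real.exp_add, add_neg_cancel, Real.exp_zero, mul_one]
end
end
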